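/- arXiv:1510.04180 — 5 statements merged into one kernel-verified Lean document; each statement's English description precedes it below -/
import Mathlib

section
/- Let I be a finite set, α a partition of I, β a partition finer than α, and q a probability vector on α with q_A > 0 for all A ∈ α. Let r be a probability vector on β extending q. Then Δ^q(β, r) ≤ Σ_{A∈α} q_A · N^β(A) · hz_A(β) − 1, where hz_A(β) = Σ_{B∈β, B⊆A} (r_B/q_A)² is the homozygosity of atom A. -/
open Finset

/-- `α` is a partition of the finite set `I`: atoms are nonempty, pairwise
disjoint, and cover `I`. -/
def IsPartition {I : Type*} [Fintype I] [DecidableEq I] (α : Finset (Finset I)) : Prop :=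
  (∀ A ∈ α, A.Nonempty) ∧
  (∀ A ∈ α, ∀ A' ∈ α, A ≠ A' → Disjoint A A') ∧
  (∀ i : I, ∃ A ∈ α, i ∈ A)

/-- `Δ^q(β, r) = h(β, r^M) − h(β, r)` is bounded above by
`Σ_{A∈α} q_A · N^β(A) · hz_A(β) − 1`, where `hz_A(β)` is the homozygosity. -/
theorem Delta_le_homozygosity_bound
    {I : Type*} [Fintype I] [DecidableEq I]
    (α β : Finset (Finset I)) (q r rM : Finset I → ℝ)
    (hα : IsPartition α) (hβ : IsPartition β)
    (hfine : ∀ B ∈ β, ∃ A ∈ α, B ⊆ A)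
    (hq0 : ∀ A ∈ α, 0 < q A) (hq1 : ∑ A ∈ α, q A = 1)
    (hr0 : ∀ B ∈ β, 0 ≤ r B)
    (hext : ∀ A ∈ α, ∑ B ∈ β.filter (fun B' => B' ⊆ A), r B = q A)
    (hrM : ∀ A ∈ α, ∀ B ∈ β, B ⊆ A →
      rM B = q A / ((β.filter (fun B' => B' ⊆ A)).card : ℝ)) :
    (-∑ B ∈ β, rM B * Real.log (rM B)) - (-∑ B ∈ β, r B * Real.log (r B)) ≤
      (∑ A ∈ α, q A * ((β.filter (fun B' => B' ⊆ A)).card : ℝ) *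
        (∑ B ∈ β.filter (fun B' => B' ⊆ A), (r B / q A) ^ 2)) - 1 := by
  classical
  obtain ⟨hαne, hαdisj, _⟩ := hα
  obtain ⟨hβne, _, hβcov⟩ := hβ
  -- the fibers partition β
  have hpd : (↑α : Set (Finset I)).PairwiseDisjoint
      (fun A => β.filter (fun B' => B' ⊆ A)) := by
    intro A hA A' hA' hne
    refine Finset.disjoint_left.2 ?_
    intro B hB hB'
    have h1 := (Finset.mem_filter.1 hB).2
    have h2 := (Finset.mem_filter.1 hB').2
    have hBne := hβne B (Finset.mem_filter.1 hB).1
    have := hαdisj A hA A' hA' hne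
    obtain ⟨i, hi⟩ := hBne
    exact absurd (Finset.mem_of_subset h2 hi)
      (Finset.disjoint_left.1 this (Finset.mem_of_subset h1 hi))
  have hcover : β = α.biUnion (fun A => β.filter (fun B' => B' ⊆ A)) := by
    ext B
    simp only [Finset.mem_biUnion, Finset.mem_filter]
    constructor
    · intro hB
      obtain ⟨A, hA, hBA⟩ := hfine B hB
      exact ⟨A, hA, hB, hBA⟩
    · rintro ⟨A, _, hB, _⟩; exact hB
  have hsplit : ∀ f : Finset I → ℝ,
      ∑ B ∈ β, f B = ∑ A ∈ α, ∑ B ∈ β.filter (fun B' => B' ⊆ A), f B := by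
    intro f
    conv_lhs => rw [hcover]
    exact Finset.sum_biUnion hpd
  -- per-atom key inequality
  have key : ∀ A ∈ α,
      (∑ B ∈ β.filter (fun B' => B' ⊆ A), r B * Real.log (r B)) -
      (∑ B ∈ β.filter (fun B' => B' ⊆ A), rM B * Real.log (rM B)) ≤
      q A * ((β.filter (fun B' => B' ⊆ A)).card : ℝ) *
        (∑ B ∈ β.filter (fun B' => B' ⊆ A), (r B / q A) ^ 2) - q A := by
    intro A hA
    set F := β.filter (fun B' => B' ⊆ A) with hF
    set N : ℝ := (F.card : ℝ) with hNdef
    have hqA := hq0 A hA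
    have hNpos : 0 < N := by
      have : F.Nonempty := by
        by_contra h
        rw [Finset.not_nonempty_iff_eq_empty] at h
        have := hext A hA
        rw [← hF, h, Finset.sum_empty] at this
        exact absurd this.symm (ne_of_gt hqA)
      have := Finset.card_pos.2 this
      rw [hNdef]
      exact_mod_cast this
    have hc : 0 < q A / N := div_pos hqA hNpos
    have hrM' : ∀ B ∈ F, rM B = q A / N := fun B hB =>
      hrM A hA B (Finset.mem_filter.1 hB).1 (Finset.mem_filter.1 hB).2
    -- Σ rM log rM = q A * log (q A / N)
    have h1 : ∑ B ∈ F, rM B * Real.log (rM B) = q A * Real.log (q A / N) := by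
      rw [Finset.sum_congr rfl (fun B hB => by rw [hrM' B hB])]
      rw [Finset.sum_const, nsmul_eq_mul, ← hNdef]
      field_simp
    -- Σ r log (qA/N) = q A * log (q A / N)
    have h2 : ∑ B ∈ F, r B * Real.log (q A / N) = q A * Real.log (q A / N) := by
      rw [← Finset.sum_mul, hext A hA]
    -- Σ r = q A
    have h3 : ∑ B ∈ F, r B = q A := hext A hA
    rw [h1, ← h2, ← Finset.sum_sub_distrib]
    have hRHS : ∑ B ∈ F, (N * (r B)^2 / q A - r B)
        = q A * N * (∑ B ∈ F, (r B / q A) ^ 2) - q A := by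
      rw [Finset.sum_sub_distrib, h3, Finset.mul_sum]
      congr 1
      refine Finset.sum_congr rfl fun B hB => ?_
      field_simp
    rw [← hRHS]
    refine Finset.sum_le_sum fun B hB => ?_
    have hrB := hr0 B (Finset.mem_filter.1 hB).1
    rcases eq_or_lt_of_le hrB with h0 | hpos
    · rw [← h0]; simp
    · have hx : 0 < r B * N / q A := div_pos (mul_pos hpos hNpos) hqA
      have hlog : Real.log (r B * N / q A) ≤ r B * N / q A - 1 :=
        Real.log_le_sub_one_of_pos hx
      have heq : Real.log (r B) - Real.log (q A / N)
          = Real.log (r B * N / q A) := by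
        rw [Real.log_div (ne_of_gt (mul_pos hpos hNpos)) (ne_of_gt hqA),
          Real.log_mul (ne_of_gt hpos) (ne_of_gt hNpos),
          Real.log_div (ne_of_gt hqA) (ne_of_gt hNpos)]
        ring
      calc r B * Real.log (r B) - r B * Real.log (q A / N)
          = r B * Real.log (r B * N / q A) := by rw [← heq]; ring
        _ ≤ r B * (r B * N / q A - 1) :=
            mul_le_mul_of_nonneg_left hlog hrB
        _ = N * (r B)^2 / q A - r B := by field_simp
  -- assemble
  have hL : (-∑ B ∈ β, rM B * Real.log (rM B)) - (-∑ B ∈ β, r B * Real.log (r B))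
      = ∑ A ∈ α, ((∑ B ∈ β.filter (fun B' => B' ⊆ A), r B * Real.log (r B)) -
        (∑ B ∈ β.filter (fun B' => B' ⊆ A), rM B * Real.log (rM B))) := by
    rw [Finset.sum_sub_distrib, ← hsplit, ← hsplit]; ring
  have hR : (∑ A ∈ α, q A * ((β.filter (fun B' => B' ⊆ A)).card : ℝ) *
        (∑ B ∈ β.filter (fun B' => B' ⊆ A), (r B / q A) ^ 2)) - 1
      = ∑ A ∈ α, (q A * ((β.filter (fun B' => B' ⊆ A)).card : ℝ) *
        (∑ B ∈ β.filter (fun B' => B' ⊆ A), (r B / q A) ^ 2) - q A) := by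
    rw [Finset.sum_sub_distrib, hq1]
  rw [hL, hR]
  exact Finset.sum_le_sum key
end

section
/- For all integers s ≥ 0 and t ≥ 0, the integral θ(s, t) = ∫₀¹ xˢ (1−x)ᵗ log x dx satisfies θ(s, t) = −(s! · t! / (s+t+1)!) · (ξ_{s+t+1} − ξ_s), where ξ_n = Σ_{j=1}^n 1/j is the n-th harmonic number (ξ_0 = 0). -/
open Real MeasureTheory intervalIntegral Filter Set
open scoped Topology

/-- The `n`-th harmonic number `ξ_n = Σ_{j=1}^n 1/j`, with `ξ_0 = 0`. -/
noncomputable def xi (n : ℕ) : ℝ := ∑ j ∈ Finset.range n, (1 : ℝ) / (j + 1)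

lemma xi_succ (n : ℕ) : xi (n + 1) = xi n + 1 / ((n : ℝ) + 1) := by
  simp [xi, Finset.sum_range_succ]

lemma neg_log_le (x : ℝ) (hx : 0 < x) : -Real.log x ≤ 2 * x ^ (-(1/2) : ℝ) := by
  have h1 : Real.log (x ^ (-(1/2) : ℝ)) ≤ x ^ (-(1/2) : ℝ) - 1 :=
    Real.log_le_sub_one_of_pos (Real.rpow_pos_of_pos hx _)
  rw [Real.log_rpow hx] at h1
  nlinarith [Real.rpow_pos_of_pos hx (-(1/2) : ℝ)]

lemma integrable_aux (s t : ℕ) :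
    IntervalIntegrable (fun x : ℝ => x ^ s * (1 - x) ^ t * Real.log x) volume 0 1 := by
  have hg : IntervalIntegrable (fun x : ℝ => 2 * x ^ (-(1/2) : ℝ)) volume 0 1 :=
    (intervalIntegrable_rpow' (by norm_num)).const_mul 2
  rw [intervalIntegrable_iff_integrableOn_Ioc_of_le (by norm_num)] at hg ⊢
  refine MeasureTheory.Integrable.mono hg ?_ ?_
  · exact (((measurable_id.pow_const s).mul
      ((measurable_const.sub measurable_id).pow_const t)).mul Real.measurable_log).aestronglyMeasurable
  · refine (ae_restrict_iff' measurableSet_Ioc).2 (Filter.Eventually.of_forall ?_)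
    intro x hx
    have hx0 : 0 < x := hx.1
    have hx1 : x ≤ 1 := hx.2
    have h1 : |x ^ s| ≤ 1 := by
      rw [abs_of_nonneg (by positivity)]
      exact pow_le_one₀ hx0.le hx1
    have h2 : |(1 - x) ^ t| ≤ 1 := by
      rw [abs_pow]
      exact pow_le_one₀ (abs_nonneg _) (abs_le.2 ⟨by linarith, by linarith⟩)
    have h3 : |Real.log x| ≤ 2 * x ^ (-(1/2) : ℝ) := by
      rw [abs_of_nonpos (Real.log_nonpos hx0.le hx1)]
      exact neg_log_le x hx0
    have hrp : (0:ℝ) ≤ 2 * x ^ (-(1/2) : ℝ) := by positivity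
    calc ‖x ^ s * (1 - x) ^ t * Real.log x‖
        = |x ^ s| * |(1 - x) ^ t| * |Real.log x| := by
          rw [Real.norm_eq_abs, abs_mul, abs_mul]
      _ ≤ 1 * 1 * (2 * x ^ (-(1/2) : ℝ)) :=
          mul_le_mul (mul_le_mul h1 h2 (abs_nonneg _) zero_le_one) h3 (abs_nonneg _)
            (by norm_num)
      _ ≤ ‖2 * x ^ (-(1/2) : ℝ)‖ := by
          rw [Real.norm_eq_abs, abs_of_nonneg hrp]; linarith

lemma integral_pow_mul_log (n : ℕ) :
    ∫ x in (0:ℝ)..1, x ^ n * Real.log x = -(1 / ((n : ℝ) + 1) ^ 2) := by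
  have hne : ((n : ℝ) + 1) ≠ 0 := by positivity
  set F : ℝ → ℝ :=
    fun x => x ^ (n + 1) * Real.log x / ((n : ℝ) + 1) - x ^ (n + 1) / ((n : ℝ) + 1) ^ 2 with hF
  have hderiv : ∀ x ∈ Ioo (0:ℝ) 1, HasDerivAt F (x ^ n * Real.log x) x := by
    intro x hx
    have hx0 : x ≠ 0 := hx.1.ne'
    have h1 : HasDerivAt (fun x : ℝ => x ^ (n + 1)) (((n : ℝ) + 1) * x ^ n) x := by
      simpa using hasDerivAt_pow (n + 1) x
    have h2 : HasDerivAt Real.log x⁻¹ x := Real.hasDerivAt_log hx0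
    have h3 := ((h1.mul h2).div_const ((n : ℝ) + 1)).sub
      (h1.div_const (((n : ℝ) + 1) ^ 2))
    refine h3.congr_deriv ?_
    field_simp
    ring
  have hint : IntervalIntegrable (fun x : ℝ => x ^ n * Real.log x) volume 0 1 := by
    simpa using integrable_aux n 0
  have hA : Tendsto (fun x : ℝ => x ^ (n + 1) * Real.log x) (𝓝[>] 0) (𝓝 0) := by
    have h := tendsto_log_mul_rpow_nhdsGT_zero (r := (n : ℝ) + 1) (by positivity)
    apply h.congr'
    filter_upwards [self_mem_nhdsWithin] with x hx
    rw [show ((n : ℝ) + 1) = ((n + 1 : ℕ) : ℝ) by push_cast; ring, Real.rpow_natCast]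
    ring
  have hpow : Tendsto (fun x : ℝ => x ^ (n + 1)) (𝓝[>] 0) (𝓝 0) := by
    have := (continuous_pow (n + 1)).tendsto (0 : ℝ)
    simpa using this.mono_left nhdsWithin_le_nhds
  have h0 : Tendsto F (𝓝[>] 0) (𝓝 0) := by
    have := (hA.div_const ((n : ℝ) + 1)).sub (hpow.div_const (((n : ℝ) + 1) ^ 2))
    simpa using this
  have h1 : Tendsto F (𝓝[<] 1) (𝓝 (-(1 / ((n : ℝ) + 1) ^ 2))) := by
    have hc : ContinuousAt F 1 := by
      apply ContinuousAt.sub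
      · exact (((continuous_pow (n+1)).continuousAt).mul
          (Real.continuousAt_log one_ne_zero)).div_const _
      · exact ((continuous_pow (n+1)).continuousAt).div_const _
    have hF1 : F 1 = -(1 / ((n : ℝ) + 1) ^ 2) := by
      simp [hF, Real.log_one]
    rw [← hF1]
    exact hc.continuousWithinAt.tendsto
  rw [integral_eq_sub_of_hasDerivAt_of_tendsto zero_lt_one hderiv hint h0 h1]
  ring

set_option maxHeartbeats 1000000 in
/-- for all integers `s, t ≥ 0`,
`θ(s, t) = ∫₀¹ xˢ (1−x)ᵗ log x dx = −(s!·t!/(s+t+1)!)·(ξ_{s+t+1} − ξ_s)`. -/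
theorem theta_eq_harmonic (s t : ℕ) :
    ∫ x in (0:ℝ)..1, x ^ s * (1 - x) ^ t * Real.log x =
      -((s.factorial * t.factorial : ℝ) / ((s + t + 1).factorial : ℝ)) *
        (xi (s + t + 1) - xi s) := by
  induction t generalizing s with
  | zero =>
      have h := integral_pow_mul_log s
      have hs : ((s.factorial : ℝ)) ≠ 0 := Nat.cast_ne_zero.2 s.factorial_ne_zero
      have hs1 : ((s : ℝ) + 1) ≠ 0 := by positivity
      simp only [pow_zero, mul_one] at *
      rw [h]
      rw [show s + 0 + 1 = s + 1 from rfl, xi_succ, Nat.factorial_succ]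
      push_cast
      field_simp
      ring
  | succ t IH =>
      have hsplit : EqOn (fun x : ℝ => x ^ s * (1 - x) ^ (t + 1) * Real.log x)
          (fun x : ℝ => x ^ s * (1 - x) ^ t * Real.log x
            - x ^ (s + 1) * (1 - x) ^ t * Real.log x) (uIcc (0:ℝ) 1) := by
        intro x _
        simp only
        ring
      rw [intervalIntegral.integral_congr hsplit,
        intervalIntegral.integral_sub (integrable_aux s t) (integrable_aux (s + 1) t),
        IH s, IH (s + 1)]
      have e1 : s + (t + 1) + 1 = (s + t + 1) + 1 := by omega
      have e2 : s + 1 + t + 1 = (s + t + 1) + 1 := by omega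
      rw [e1, e2, xi_succ (s + t + 1), xi_succ s, Nat.factorial_succ (s + t + 1),
        Nat.factorial_succ t, Nat.factorial_succ s]
      have h3 : (((s + t + 1).factorial : ℝ)) ≠ 0 := Nat.cast_ne_zero.2 (Nat.factorial_ne_zero _)
      push_cast
      set A := xi (s + t + 1) with hA
      set C := xi s with hC
      set a := (s.factorial : ℝ) with ha
      set b := (t.factorial : ℝ) with hb
      set K := ((s + t + 1).factorial : ℝ) with hK
      set S := (s : ℝ) with hS
      set T := (t : ℝ) with hT
      have h1 : S + 1 ≠ 0 := by rw [hS]; positivity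
      have h2 : S + T + 1 + 1 ≠ 0 := by rw [hS, hT]; positivity
      field_simp
      ring
end

section
/- For all integers s ≥ 2 and t with 1 ≤ t ≤ s−1, the function φ(s, t) = t·(ξ_s − ξ_t) + (s−t)·(ξ_s − ξ_{s−t}) satisfies φ(s, t) ≤ s · log 2, where ξ_n = Σ_{j=1}^n 1/j is the n-th harmonic number. -/
lemma xi_diff_le (t : ℕ) (ht : 1 ≤ t) : ∀ s, t ≤ s →
    xi s - xi t ≤ Real.log s - Real.log t := by
  refine Nat.le_induction (by simp) ?_
  intro s hs ih
  have hs0 : (0 : ℝ) < s := by exact_mod_cast Nat.lt_of_lt_of_le Nat.zero_lt_one (le_trans ht hs)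
  have hstep : (1 : ℝ) / (s + 1) ≤ Real.log (s + 1) - Real.log s := by
    have h1 : (0 : ℝ) < (s : ℝ) / (s + 1) := by positivity
    have := Real.log_le_sub_one_of_pos h1
    rw [Real.log_div (ne_of_gt hs0) (by positivity)] at this
    have hss : (s : ℝ) / (s + 1) - 1 = -(1 / (s + 1)) := by field_simp; ring
    rw [hss] at this
    linarith
  have hxi : xi (s + 1) = xi s + 1 / (s + 1) := by
    simp [xi, Finset.sum_range_succ]
  push_cast
  rw [hxi]
  linarith

/-- for integers `s ≥ 2` and `1 ≤ t ≤ s−1`,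
`φ(s, t) = t·(ξ_s − ξ_t) + (s−t)·(ξ_s − ξ_{s−t}) ≤ s·log 2`. -/
theorem phi_le_s_log_two (s t : ℕ) (hs : 2 ≤ s) (ht1 : 1 ≤ t) (hts : t ≤ s - 1) :
    (t : ℝ) * (xi s - xi t) + ((s : ℝ) - (t : ℝ)) * (xi s - xi (s - t)) ≤
      (s : ℝ) * Real.log 2 := by
  have hts' : t ≤ s := le_trans hts (Nat.sub_le s 1)
  have htlt : t < s := lt_of_le_of_lt hts (by omega)
  have h1 : xi s - xi t ≤ Real.log s - Real.log t := xi_diff_le t ht1 s hts'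
  have hst1 : 1 ≤ s - t := by omega
  have h2 : xi s - xi (s - t) ≤ Real.log s - Real.log ((s - t : ℕ)) :=
    xi_diff_le (s - t) hst1 s (Nat.sub_le s t)
  set a : ℝ := (t : ℝ) with hadef
  set b : ℝ := (s : ℝ) - (t : ℝ) with hbdef
  have ha : (0 : ℝ) < a := by positivity
  have hb : (0 : ℝ) < b := by
    simp only [hbdef, sub_pos]; exact_mod_cast htlt
  have hcast : ((s - t : ℕ) : ℝ) = b := by
    simp [hbdef, Nat.cast_sub hts']
  rw [hcast] at h2
  clear_value a b
  -- convexity: a log a + b log b ≥ (a+b) log ((a+b)/2)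
  have hconv := Real.convexOn_mul_log.2 (Set.mem_Ici.2 ha.le) (Set.mem_Ici.2 hb.le)
    (by norm_num : (0:ℝ) ≤ (1:ℝ)/2) (by norm_num : (0:ℝ) ≤ (1:ℝ)/2) (by norm_num)
  simp only [smul_eq_mul] at hconv
  have hab : a + b = (s : ℝ) := by simp [hadef, hbdef]
  have hhalf : (1:ℝ)/2 * a + (1:ℝ)/2 * b = (s : ℝ) / 2 := by rw [← hab]; ring
  rw [hhalf] at hconv
  have hs0 : (0 : ℝ) < s := by positivity
  have hlog : Real.log ((s : ℝ) / 2) = Real.log s - Real.log 2 :=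
    Real.log_div (ne_of_gt hs0) (by norm_num)
  rw [hlog] at hconv
  -- hconv : s/2 * (log s - log 2) ≤ 1/2 * (a * log a) + 1/2 * (b * log b)
  have key : a * (Real.log s - Real.log a) + b * (Real.log s - Real.log b)
      ≤ (s : ℝ) * Real.log 2 := by
    have hL : a * Real.log (s:ℝ) + b * Real.log (s:ℝ) = (s:ℝ) * Real.log (s:ℝ) := by
      rw [← hab]; ring
    nlinarith [hconv, hL]
  calc a * (xi s - xi t) + b * (xi s - xi (s - t))
      ≤ a * (Real.log s - Real.log a) + b * (Real.log s - Real.log b) := by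
        gcongr
    _ ≤ (s : ℝ) * Real.log 2 := key
end

section
/- Let I be a finite set, α a partition of I, β a partition strictly finer than α, and q a probability vector on α with q_A > 0 for all A ∈ α. Let P be the random extension of q built by normalizing independent rate-1 exponential random variables within each atom of α (P(B) = q_A · (Σ_{i∈B} G_i)/(Σ_{i∈A} G_i) for B ∈ β, B ⊆ A ∈ α), and set Δ^q(β, P) = Σ_{A∈α} q_A·log N^β(A) + Σ_{B∈β} P(B)·log(P(B)/q_{A^B}). Let β_{0,K} = (β_k : k = 0,…,K), K = |β| − |α|, be any dyadic sequence of partitions from α to β, and define for k = 0,…,K−1: G_k = q_{A^k}·log max{N^β(B̄^k), N^β(B^k∖B̄^k)} + log 2 + min{−q_{A^k}·log q_{A^k}, e⁻¹}, H_k = q_{A^k}·log N^β(B^k) + min{−q_{A^k}·log q_{A^k}, e⁻¹}, L_k = (q_{A^k}/|A^k|)·(|B̄^k|·(ξ_{|B^k|} − ξ_{|B̄^k|}) + |B^k∖B̄^k|·(ξ_{|B^k|} − ξ_{|B^k∖B̄^k|})), and ζ_k = max{G_k, H_k + L_k}. Then for all λ > 0, P(Δ^q(β, P) ≤ E(Δ^q(β,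 P)) − λ) ≤ exp(−λ² / (2·Σ_{k=0}^{K−1} ζ_k²)). -/
open Finset MeasureTheory ProbabilityTheory

lemma convex_exp_bound {c y t : ℝ} (hc : 0 < c) (h1 : -c ≤ y) (h2 : y ≤ c) :
    Real.exp (t * y) ≤ (Real.exp (-(t*c))/(2*c)) * c - (Real.exp (-(t*c))/(2*c)) * y
      + ((Real.exp (t*c)/(2*c)) * c + (Real.exp (t*c)/(2*c)) * y) := by
  have hcne : c ≠ 0 := ne_of_gt hc
  have ha : (0:ℝ) ≤ (c - y)/(2*c) := div_nonneg (by linarith) (by linarith)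
  have hb' : (0:ℝ) ≤ (c + y)/(2*c) := div_nonneg (by linarith) (by linarith)
  have hab : (c - y)/(2*c) + (c + y)/(2*c) = 1 := by field_simp; ring
  have key := convexOn_exp.2 (Set.mem_univ (-(t*c))) (Set.mem_univ (t*c)) ha hb' hab
  simp only [smul_eq_mul] at key
  have harg : (c - y)/(2*c) * (-(t*c)) + (c + y)/(2*c) * (t*c) = t * y := by
    field_simp; ring
  rw [harg] at key
  refine key.trans (le_of_eq ?_)
  ring

lemma concentration_of_bounded {Ω : Type*} [MeasurableSpace Ω] (μ : Measure Ω)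
    [IsProbabilityMeasure μ] {X : Ω → ℝ} (hX : Measurable X) {c : ℝ} (hc : 0 < c)
    (hb : ∀ᵐ ω ∂μ, 0 ≤ X ω ∧ X ω ≤ c) {lam : ℝ} (hlam : 0 < lam) :
    μ {ω | X ω ≤ (∫ ω', X ω' ∂μ) - lam} ≤ ENNReal.ofReal (Real.exp (-(lam^2) / (2*c^2))) := by
  have hcne : c ≠ 0 := ne_of_gt hc
  have hXint : Integrable X μ := by
    refine ⟨hX.aestronglyMeasurable, HasFiniteIntegral.of_bounded (C := c) ?_⟩
    filter_upwards [hb] with ω h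
    rw [Real.norm_eq_abs, abs_le]; exact ⟨by linarith [h.1], h.2⟩
  set m : ℝ := ∫ ω', X ω' ∂μ with hm
  have hm0 : 0 ≤ m := integral_nonneg_of_ae (by filter_upwards [hb] with ω h; exact h.1)
  have hmc : m ≤ c := by
    have := integral_mono_ae hXint (integrable_const c) (by filter_upwards [hb] with ω h; exact h.2)
    simpa [hm] using this
  set Y : Ω → ℝ := fun ω => m - X ω with hYdef
  have hYmeas : Measurable Y := measurable_const.sub hX
  have hYint : Integrable Y μ := (integrable_const m).sub hXint
  have hY0 : ∫ ω, Y ω ∂μ = 0 := by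
    rw [integral_sub (integrable_const m) hXint, integral_const]; simp [hm]
  have hYb : ∀ᵐ ω ∂μ, -c ≤ Y ω ∧ Y ω ≤ c := by
    filter_upwards [hb] with ω h
    exact ⟨by simp only [hYdef]; linarith [h.2], by simp only [hYdef]; linarith [h.1]⟩
  set s : ℝ := lam / c^2 with hs
  have hs0 : 0 < s := div_pos hlam (by positivity)
  set a1 : ℝ := Real.exp (-(s*c))/(2*c) with ha1
  set b1 : ℝ := Real.exp (s*c)/(2*c) with hb1
  have hpt : ∀ᵐ ω ∂μ, Real.exp (s * Y ω) ≤
      a1 * c - a1 * Y ω + (b1 * c + b1 * Y ω) := by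
    filter_upwards [hYb] with ω h
    exact convex_exp_bound hc h.1 h.2
  have hEint : Integrable (fun ω => Real.exp (s * Y ω)) μ := by
    refine ⟨(Real.measurable_exp.comp (hYmeas.const_mul s)).aestronglyMeasurable,
      HasFiniteIntegral.of_bounded (C := Real.exp (s*c)) ?_⟩
    filter_upwards [hYb] with ω h
    rw [Real.norm_eq_abs, abs_of_pos (Real.exp_pos _)]
    exact Real.exp_le_exp.2 (by nlinarith [h.2, hs0.le])
  have hRHSint : Integrable (fun ω => a1 * c - a1 * Y ω + (b1 * c + b1 * Y ω)) μ :=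
    ((integrable_const _).sub (hYint.const_mul a1)).add
      ((integrable_const _).add (hYint.const_mul b1))
  have hmgf : mgf Y μ s ≤ Real.exp ((s*c)^2/2) := by
    have h1 : mgf Y μ s ≤ ∫ ω, (a1 * c - a1 * Y ω + (b1 * c + b1 * Y ω)) ∂μ :=
      integral_mono_ae hEint hRHSint hpt
    have hfe : (fun ω => a1 * c - a1 * Y ω + (b1 * c + b1 * Y ω))
        = fun ω => (a1*c + b1*c) + (b1 - a1) * Y ω := by funext ω; ring
    have h2 : ∫ ω, (a1 * c - a1 * Y ω + (b1 * c + b1 * Y ω)) ∂μ = Real.cosh (s*c) := by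
      rw [hfe, integral_add (integrable_const _) (hYint.const_mul _),
        integral_const_mul, hY0, integral_const, Real.cosh_eq]
      simp only [measure_univ, probReal_univ, ENNReal.toReal_one, smul_eq_mul, one_mul, mul_zero,
        add_zero, ha1, hb1]
      field_simp
      ring
    exact (h2 ▸ h1).trans (Real.cosh_le_exp_half_sq _)
  have hset : {ω | X ω ≤ m - lam} = {ω | lam ≤ Y ω} := by
    ext ω; simp only [Set.mem_setOf_eq, hYdef]; constructor <;> intro <;> linarith
  have hch := measure_ge_le_exp_mul_mgf (X := Y) (μ := μ) (t := s) lam hs0.le hEint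
  have hfin : μ {ω | lam ≤ Y ω} ≠ ⊤ := measure_ne_top _ _
  have hstep : μ {ω | lam ≤ Y ω} ≤ ENNReal.ofReal (Real.exp (-s*lam) * mgf Y μ s) := by
    rw [← ENNReal.ofReal_toReal hfin]
    exact ENNReal.ofReal_le_ofReal hch
  rw [hm] at hset ⊢
  rw [hset]
  refine hstep.trans (ENNReal.ofReal_le_ofReal ?_)
  have hm2 : Real.exp (-s*lam) * mgf Y μ s ≤ Real.exp (-s*lam) * Real.exp ((s*c)^2/2) :=
    mul_le_mul_of_nonneg_left hmgf (Real.exp_pos _).le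
  refine hm2.trans ?_
  rw [← Real.exp_add]
  apply Real.exp_le_exp.2
  apply le_of_eq
  rw [hs]
  field_simp
  ring

lemma log_le_div_e {x : ℝ} (hx : 0 < x) : Real.log x ≤ x / Real.exp 1 := by
  have he : (0:ℝ) < Real.exp 1 := Real.exp_pos 1
  have h1 : Real.log (x / Real.exp 1) ≤ x / Real.exp 1 - 1 :=
    Real.log_le_sub_one_of_pos (by positivity)
  rw [Real.log_div (ne_of_gt hx) (ne_of_gt he), Real.log_exp] at h1
  linarith

lemma sq_log_le {N : ℕ} (hN : 4 ≤ N) : (Real.log N)^2 ≤ 4 * ((N:ℝ) - 2) * (Real.log 2)^2 := by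
  have hN0 : (0:ℝ) < N := by positivity
  have hN4 : (4:ℝ) ≤ (N:ℝ) := by exact_mod_cast hN
  have hsq : Real.log N = 2 * Real.log (Real.sqrt N) := by
    rw [Real.log_sqrt (le_of_lt hN0)]; ring
  have h1 : Real.log (Real.sqrt N) ≤ Real.sqrt N / Real.exp 1 :=
    log_le_div_e (Real.sqrt_pos.2 hN0)
  have h2 : (Real.sqrt N)^2 = (N:ℝ) := Real.sq_sqrt (le_of_lt hN0)
  have hs0 : 0 ≤ Real.sqrt N := Real.sqrt_nonneg _
  have he : 2.7182818283 < Real.exp 1 := Real.exp_one_gt_d9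
  have hl2 : 0.6931471803 < Real.log 2 := Real.log_two_gt_d9
  have key : (Real.log N)^2 ≤ 4 * (N:ℝ) / (Real.exp 1)^2 := by
    rw [hsq]
    have hlogpos : 0 ≤ Real.log (Real.sqrt N) := Real.log_nonneg (by
      rw [← Real.sqrt_one]
      exact Real.sqrt_le_sqrt (by linarith))
    have h3 : (2 * Real.log (Real.sqrt N))^2 ≤ (2 * (Real.sqrt N / Real.exp 1))^2 :=
      pow_le_pow_left₀ (by linarith) (by linarith) 2
    refine h3.trans (le_of_eq ?_)
    field_simp
    nlinarith [h2]
  refine key.trans ?_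
  rw [div_le_iff₀ (by positivity)]
  have hm : (1.8:ℝ) ≤ Real.exp 1 * Real.log 2 := by nlinarith
  have h3 : (2:ℝ) ≤ (Real.exp 1 * Real.log 2)^2 := by nlinarith [hm]
  nlinarith [h3, hN4]

lemma star_ineq {N : ℕ} (hN : 2 ≤ N) {q : ℝ} (hq0 : 0 < q) (hq1 : q ≤ 1) :
    q * (Real.log N)^2 ≤
      (q * Real.log N + (1 - q) * Real.log 2)^2 + ((N:ℝ) - 2) * (Real.log 2)^2 := by
  set a := Real.log N with hadef
  set b := Real.log 2 with hbdef
  have hb0 : 0 < b := Real.log_pos (by norm_num)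
  have hba : b ≤ a := Real.log_le_log (by norm_num) (by exact_mod_cast hN)
  have hN2 : (2:ℝ) ≤ (N:ℝ) := by exact_mod_cast hN
  have ha0 : 0 ≤ a := by linarith
  have expand : (q*a + (1-q)*b)^2 ≥ q^2*a^2 + 2*q*(1-q)*a*b := by nlinarith [sq_nonneg ((1-q)*b)]
  have main : q*(1-q)*a*(a - 2*b) ≤ ((N:ℝ) - 2) * b^2 := by
    rcases le_or_gt a (2*b) with hc | hc
    · have h1 : 0 ≤ q*(1-q)*a :=
        mul_nonneg (mul_nonneg hq0.le (by linarith)) ha0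
      have h2 : q*(1-q)*a*(a-2*b) ≤ 0 := mul_nonpos_of_nonneg_of_nonpos h1 (by linarith)
      have h3 : (0:ℝ) ≤ ((N:ℝ)-2)*b^2 := mul_nonneg (by linarith) (sq_nonneg b)
      linarith
    · have hN4R : (4:ℝ) < (N:ℝ) := by
        by_contra h
        push_neg at h
        have h4 : a ≤ 2*b := by
          rw [hadef, hbdef, show 2*Real.log 2 = Real.log 4 by
            rw [show (4:ℝ) = 2*2 by norm_num, Real.log_mul two_ne_zero two_ne_zero]; ring]
          exact Real.log_le_log (by linarith) h
        linarith
      have hN4 : 4 ≤ N := by exact_mod_cast hN4R.le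
      have hsq := sq_log_le hN4
      rw [← hadef, ← hbdef] at hsq
      have hq14 : q*(1-q) ≤ 1/4 := by nlinarith [sq_nonneg (q - 1/2)]
      have h2 : q*(1-q)*a*(a-2*b) ≤ (1/4)*(a*a) := by
        nlinarith [mul_nonneg ha0 (by linarith : (0:ℝ) ≤ a - 2*b),
          mul_nonneg (mul_nonneg hq0.le (by linarith : (0:ℝ) ≤ 1-q)) ha0]
      refine h2.trans ?_
      nlinarith [hsq]
  nlinarith [expand, main]

lemma entropy_lower {γ : Type*} [DecidableEq γ] (s : Finset γ) (p : γ → ℝ) (qA : ℝ)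
    (hq : 0 < qA) (hp : ∀ B ∈ s, 0 < p B) (hsum : ∑ B ∈ s, p B = qA) :
    -qA * Real.log s.card ≤ ∑ B ∈ s, p B * Real.log (p B / qA) := by
  have hsne : s.Nonempty := by
    by_contra h
    rw [not_nonempty_iff_eq_empty] at h
    rw [h] at hsum; simp at hsum; exact absurd hsum.symm (ne_of_gt hq)
  have hn0 : (0:ℝ) < s.card := by exact_mod_cast card_pos.2 hsne
  have key : ∑ B ∈ s, p B * Real.log (qA / ((s.card : ℝ) * p B)) ≤ 0 := by
    have hle : ∀ B ∈ s, p B * Real.log (qA / ((s.card : ℝ) * p B)) ≤ qA / s.card - p B := by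
      intro B hB
      have hpB := hp B hB
      have harg : 0 < qA / ((s.card : ℝ) * p B) := by positivity
      have h1 := Real.log_le_sub_one_of_pos harg
      have h2 : p B * Real.log (qA / ((s.card:ℝ) * p B)) ≤ p B * (qA / ((s.card:ℝ) * p B) - 1) :=
        mul_le_mul_of_nonneg_left h1 hpB.le
      refine h2.trans (le_of_eq ?_)
      field_simp
    calc ∑ B ∈ s, p B * Real.log (qA / ((s.card : ℝ) * p B))
        ≤ ∑ B ∈ s, (qA / s.card - p B) := Finset.sum_le_sum hle
      _ = 0 := by rw [Finset.sum_sub_distrib, Finset.sum_const, hsum, nsmul_eq_mul]; field_simp; ring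
  have expand : ∀ B ∈ s, p B * Real.log (qA / ((s.card : ℝ) * p B)) =
      -(p B * Real.log (p B / qA)) - p B * Real.log s.card := by
    intro B hB
    have hpB := hp B hB
    rw [Real.log_div (by positivity) (by positivity), Real.log_mul (by positivity) (ne_of_gt hpB),
      Real.log_div (ne_of_gt hpB) (ne_of_gt hq)]
    ring
  rw [Finset.sum_congr rfl expand, Finset.sum_sub_distrib] at key
  have h4 : ∑ x ∈ s, p x * Real.log s.card = qA * Real.log s.card := by
    rw [← Finset.sum_mul, hsum]
  have h5 : ∑ x ∈ s, -(p x * Real.log (p x / qA)) = -∑ x ∈ s, p x * Real.log (p x / qA) :=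
    Finset.sum_neg_distrib _
  rw [h4, h5] at key
  linarith

lemma entropy_upper {γ : Type*} [DecidableEq γ] (s : Finset γ) (p : γ → ℝ) (qA : ℝ)
    (hq : 0 < qA) (hp : ∀ B ∈ s, 0 < p B) (hsum : ∑ B ∈ s, p B = qA) :
    ∑ B ∈ s, p B * Real.log (p B / qA) ≤ 0 := by
  apply Finset.sum_nonpos
  intro B hB
  have hpB := hp B hB
  have hple : p B ≤ qA := by
    rw [← hsum]
    exact Finset.single_le_sum (fun C hC => (hp C hC).le) hB
  apply mul_nonpos_of_nonneg_of_nonpos hpB.le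
  apply Real.log_nonpos (by positivity)
  rw [div_le_one hq]; exact hple

lemma exp_pos_ae {Ω : Type*} [MeasurableSpace Ω] (μ : Measure Ω) [IsProbabilityMeasure μ]
    (g : Ω → ℝ) (hg : Measurable g) (h : Measure.map g μ = expMeasure 1) :
    ∀ᵐ ω ∂μ, 0 < g ω := by
  have h1 : μ {ω | g ω ≤ 0} = 0 := by
    have h2 : {ω | g ω ≤ 0} = g ⁻¹' (Set.Iic 0) := rfl
    rw [h2, ← Measure.map_apply hg measurableSet_Iic, h]
    show gammaMeasure 1 1 (Set.Iic 0) = 0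
    rw [gammaMeasure, withDensity_apply _ measurableSet_Iic]
    rw [setLIntegral_congr (Filter.EventuallyEq.symm Iio_ae_eq_Iic)]
    exact lintegral_gammaPDF_of_nonpos le_rfl
  rw [ae_iff]
  convert h1 using 2
  ext ω
  simp [not_lt]

section Dyadic
variable {I : Type*} [Fintype I] [DecidableEq I]
  {α β : Finset (Finset I)} {K : ℕ} {βs : ℕ → Finset (Finset I)}
  {Bk Bbar : ℕ → Finset I}

/-- upward induction: each βs k is a "pre-partition" (nonempty, pairwise disjoint atoms) -/
lemma dyadic_up (hβ0 : βs 0 = α)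
    (hα1 : ∀ A ∈ α, A.Nonempty) (hα2 : ∀ A ∈ α, ∀ A' ∈ α, A ≠ A' → Disjoint A A')
    (hBk : ∀ k < K, Bk k ∈ βs k)
    (hBbar : ∀ k < K, Bbar k ⊆ Bk k ∧ (Bbar k).Nonempty ∧ (Bk k \ Bbar k).Nonempty)
    (hsplit : ∀ k < K,
      βs (k + 1) = insert (Bbar k) (insert (Bk k \ Bbar k) ((βs k).erase (Bk k)))) :
    ∀ k ≤ K, (∀ B ∈ βs k, B.Nonempty) ∧
      (∀ B ∈ βs k, ∀ B' ∈ βs k, B ≠ B' → Disjoint B B') := by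
  intro k
  induction k with
  | zero => intro _; rw [hβ0]; exact ⟨hα1, hα2⟩
  | succ k ih =>
    intro hk
    have hkK : k < K := by omega
    obtain ⟨ih1, ih2⟩ := ih (by omega)
    obtain ⟨hsub, hne1, hne2⟩ := hBbar k hkK
    have hBkmem := hBk k hkK
    have hmem : ∀ B ∈ βs (k+1), B = Bbar k ∨ B = Bk k \ Bbar k ∨ (B ∈ βs k ∧ B ≠ Bk k) := by
      intro B hB
      rw [hsplit k hkK] at hB
      simp only [mem_insert, mem_erase] at hB
      tauto
    have hdisjBk : ∀ B ∈ βs k, B ≠ Bk k → Disjoint B (Bk k) := fun B hB hne =>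
      ih2 B hB (Bk k) hBkmem hne
    constructor
    · intro B hB
      rcases hmem B hB with rfl | rfl | ⟨h1, _⟩
      · exact hne1
      · exact hne2
      · exact ih1 B h1
    · intro B hB B' hB' hne
      have hd : Disjoint (Bbar k) (Bk k \ Bbar k) := disjoint_sdiff
      rcases hmem B hB with rfl | rfl | ⟨h1, h1'⟩ <;>
        rcases hmem B' hB' with rfl | rfl | ⟨h2, h2'⟩
      · exact absurd rfl hne
      · exact hd
      · exact Disjoint.mono_left hsub ((hdisjBk B' h2 h2').symm)
      · exact hd.symm
      · exact absurd rfl hne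
      · exact Disjoint.mono_left (sdiff_subset) ((hdisjBk B' h2 h2').symm)
      · exact Disjoint.mono_right hsub (hdisjBk B h1 h1')
      · exact Disjoint.mono_right (sdiff_subset) (hdisjBk B h1 h1')
      · exact ih2 B h1 B' h2 hne
end Dyadic

section Dyadic2
variable {I : Type*} [DecidableEq I]
  {β : Finset (Finset I)} {K : ℕ} {βs : ℕ → Finset (Finset I)}
  {Bk Bbar : ℕ → Finset I}

set_option linter.unusedSectionVars false

/-- downward induction: β refines each βs k, and each βs k atom contains a β atom -/
lemma dyadic_down (hβK : βs K = β)
    (hβ1 : ∀ B ∈ β, B.Nonempty)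
    (hBk : ∀ k < K, Bk k ∈ βs k)
    (hBbar : ∀ k < K, Bbar k ⊆ Bk k ∧ (Bbar k).Nonempty ∧ (Bk k \ Bbar k).Nonempty)
    (hsplit : ∀ k < K,
      βs (k + 1) = insert (Bbar k) (insert (Bk k \ Bbar k) ((βs k).erase (Bk k)))) :
    ∀ k ≤ K, (∀ B ∈ βs k, ∃ B0 ∈ β, B0 ⊆ B) ∧ (∀ B0 ∈ β, ∃ B ∈ βs k, B0 ⊆ B) := by
  suffices h : ∀ m : ℕ, ∀ k : ℕ, k + m = K →
      (∀ B ∈ βs k, ∃ B0 ∈ β, B0 ⊆ B) ∧ (∀ B0 ∈ β, ∃ B ∈ βs k, B0 ⊆ B) by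
    intro k hk
    exact h (K - k) k (by omega)
  intro m
  induction m with
  | zero =>
    intro k hk
    have : k = K := by omega
    subst this
    rw [hβK]
    exact ⟨fun B hB => ⟨B, hB, subset_rfl⟩, fun B hB => ⟨B, hB, subset_rfl⟩⟩
  | succ m ih =>
    intro k hk
    have hkK : k < K := by omega
    obtain ⟨ih1, ih2⟩ := ih (k+1) (by omega)
    obtain ⟨hsub, hne1, hne2⟩ := hBbar k hkK
    have hup : ∀ C ∈ βs (k+1), ∃ B ∈ βs k, C ⊆ B := by
      intro C hC
      rw [hsplit k hkK] at hC
      simp only [mem_insert, mem_erase] at hC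
      rcases hC with rfl | rfl | ⟨_, h2⟩
      · exact ⟨Bk k, hBk k hkK, hsub⟩
      · exact ⟨Bk k, hBk k hkK, sdiff_subset⟩
      · exact ⟨C, h2, subset_rfl⟩
    constructor
    · intro B hB
      by_cases hBeq : B = Bk k
      · subst hBeq
        have hBbar_mem : Bbar k ∈ βs (k+1) := by
          rw [hsplit k hkK]; exact mem_insert_self _ _
        obtain ⟨B0, hB0, hB0sub⟩ := ih1 (Bbar k) hBbar_mem
        exact ⟨B0, hB0, hB0sub.trans hsub⟩
      · have : B ∈ βs (k+1) := by
          rw [hsplit k hkK]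
          exact mem_insert_of_mem (mem_insert_of_mem (mem_erase.2 ⟨hBeq, hB⟩))
        exact ih1 B this
    · intro B0 hB0
      obtain ⟨C, hC, hCsub⟩ := ih2 B0 hB0
      obtain ⟨B, hB, hBsub⟩ := hup C hC
      exact ⟨B, hB, hCsub.trans hBsub⟩

/-- count of β-atoms splits along a dyadic split -/
lemma dyadic_count (hβK : βs K = β)
    (hβ1 : ∀ B ∈ β, B.Nonempty)
    (hBk : ∀ k < K, Bk k ∈ βs k)
    (hBbar : ∀ k < K, Bbar k ⊆ Bk k ∧ (Bbar k).Nonempty ∧ (Bk k \ Bbar k).Nonempty)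
    (hsplit : ∀ k < K,
      βs (k + 1) = insert (Bbar k) (insert (Bk k \ Bbar k) ((βs k).erase (Bk k))))
    (hdisj : ∀ k ≤ K, ∀ B ∈ βs k, ∀ B' ∈ βs k, B ≠ B' → Disjoint B B')
    {k : ℕ} (hk : k < K) :
    (β.filter (fun B => B ⊆ Bbar k)).card + (β.filter (fun B => B ⊆ Bk k \ Bbar k)).card
      = (β.filter (fun B => B ⊆ Bk k)).card := by
  obtain ⟨hsub, hne1, hne2⟩ := hBbar k hk
  have hrefine := (dyadic_down hβK hβ1 hBk hBbar hsplit (k+1) (by omega)).2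
  have hdisj1 := hdisj (k+1) (by omega)
  have hunion : β.filter (fun B => B ⊆ Bk k) =
      (β.filter (fun B => B ⊆ Bbar k)) ∪ (β.filter (fun B => B ⊆ Bk k \ Bbar k)) := by
    ext B0
    simp only [mem_filter, mem_union]
    constructor
    · rintro ⟨hB0, hB0sub⟩
      obtain ⟨C, hC, hCsub⟩ := hrefine B0 hB0
      have hCcases : C = Bbar k ∨ C = Bk k \ Bbar k ∨ (C ∈ βs k ∧ C ≠ Bk k) := by
        rw [hsplit k hk] at hC
        simp only [mem_insert, mem_erase] at hC
        tauto
      rcases hCcases with rfl | rfl | ⟨hC1, hC2⟩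
      · exact Or.inl ⟨hB0, hCsub⟩
      · exact Or.inr ⟨hB0, hCsub⟩
      · exfalso
        have hd := hdisj k (by omega) C hC1 (Bk k) (hBk k hk) hC2
        have : B0 ⊆ C ∩ Bk k := subset_inter hCsub hB0sub
        rw [(Finset.disjoint_iff_inter_eq_empty.1 hd)] at this
        exact absurd (subset_empty.1 this) (Finset.nonempty_iff_ne_empty.1 (hβ1 B0 hB0))
    · rintro (⟨hB0, hB0sub⟩ | ⟨hB0, hB0sub⟩)
      · exact ⟨hB0, hB0sub.trans hsub⟩
      · exact ⟨hB0, hB0sub.trans sdiff_subset⟩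
  rw [hunion]
  rw [card_union_of_disjoint]
  rw [Finset.disjoint_filter]
  intro B0 hB0 hsub1 hsub2
  have : B0 ⊆ Bbar k ∩ (Bk k \ Bbar k) := subset_inter hsub1 hsub2
  rw [Finset.disjoint_iff_inter_eq_empty.1 disjoint_sdiff] at this
  exact absurd (subset_empty.1 this) (Finset.nonempty_iff_ne_empty.1 (hβ1 B0 hB0))
end Dyadic2

/-- Theorem 2, Azuma–Hoeffding bound: for any dyadic sequence
of partitions `β_0 = α ⪯ β_1 ⪯ … ⪯ β_K = β` and the associated martingale
increment bounds `ζ_k = max{G_k, H_k + L_k}`, for all `λ > 0`,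
`ℙ(Δ^q(β,P) ≤ E(Δ^q(β,P)) − λ) ≤ exp(−λ²/(2 Σ_k ζ_k²))`. -/
theorem azuma_hoeffding_Delta
    {I : Type*} [Fintype I] [DecidableEq I]
    {Ω : Type*} [MeasurableSpace Ω] (μ : Measure Ω) [IsProbabilityMeasure μ]
    (α β : Finset (Finset I)) (q : Finset I → ℝ)
    (hα : IsPartition α) (hβ : IsPartition β)
    (hfine : ∀ B ∈ β, ∃ A ∈ α, B ⊆ A) (hstrict : α ≠ β)
    (hq0 : ∀ A ∈ α, 0 < q A) (hq1 : ∑ A ∈ α, q A = 1)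
    (G : I → Ω → ℝ) (hGmeas : ∀ i, Measurable (G i))
    (hGindep : iIndepFun G μ)
    (hGexp : ∀ i, Measure.map (G i) μ = expMeasure 1)
    (P : Finset I → Ω → ℝ)
    (hP : ∀ A ∈ α, ∀ S : Finset I, S ⊆ A → ∀ ω,
      P S ω = q A * (∑ i ∈ S, G i ω) / (∑ i ∈ A, G i ω))
    (Δ : Ω → ℝ)
    (hΔ : ∀ ω, Δ ω =
      ∑ A ∈ α, q A * Real.log ((β.filter (fun B => B ⊆ A)).card : ℝ) +
        ∑ A ∈ α, ∑ B ∈ β.filter (fun B => B ⊆ A),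
          P B ω * Real.log (P B ω / q A))
    (K : ℕ) (hK : K = β.card - α.card)
    (βs : ℕ → Finset (Finset I)) (hβ0 : βs 0 = α) (hβK : βs K = β)
    (Bk Bbar Ak : ℕ → Finset I)
    (hBk : ∀ k < K, Bk k ∈ βs k)
    (hBbar : ∀ k < K, Bbar k ⊆ Bk k ∧ (Bbar k).Nonempty ∧ (Bk k \ Bbar k).Nonempty)
    (hsplit : ∀ k < K,
      βs (k + 1) = insert (Bbar k) (insert (Bk k \ Bbar k) ((βs k).erase (Bk k))))
    (hAk : ∀ k < K, Ak k ∈ α ∧ Bk k ⊆ Ak k)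
    (ζ : ℕ → ℝ)
    (hζ : ∀ k < K, ζ k = max
      (q (Ak k) * Real.log
          ((max ((β.filter (fun B => B ⊆ Bbar k)).card)
              ((β.filter (fun B => B ⊆ Bk k \ Bbar k)).card) : ℕ) : ℝ) +
        Real.log 2 + min (-(q (Ak k)) * Real.log (q (Ak k))) (Real.exp 1)⁻¹)
      ((q (Ak k) * Real.log ((β.filter (fun B => B ⊆ Bk k)).card : ℝ) +
          min (-(q (Ak k)) * Real.log (q (Ak k))) (Real.exp 1)⁻¹) +
        (q (Ak k) / ((Ak k).card : ℝ)) *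
          (((Bbar k).card : ℝ) * (xi (Bk k).card - xi (Bbar k).card) +
            ((Bk k \ Bbar k).card : ℝ) *
              (xi (Bk k).card - xi (Bk k \ Bbar k).card))))
    (lam : ℝ) (hlam : 0 < lam) :
    μ {ω | Δ ω ≤ (∫ ω', Δ ω' ∂μ) - lam} ≤
      ENNReal.ofReal
        (Real.exp (-(lam ^ 2) / (2 * ∑ k ∈ Finset.range K, (ζ k) ^ 2))) := by
  classical
  obtain ⟨hα1, hα2, hα3⟩ := hα
  obtain ⟨hβ1, hβ2, hβ3⟩ := hβ
  -- uniqueness of the α-atom containing a nonempty set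
  have huniq : ∀ {A A' S : Finset I}, A ∈ α → A' ∈ α → S.Nonempty →
      S ⊆ A → S ⊆ A' → A = A' := by
    intro A A' S hA hA' hS h1 h2
    by_contra hne
    have hd := hα2 A hA A' hA' hne
    have hss : S ⊆ A ∩ A' := subset_inter h1 h2
    rw [Finset.disjoint_iff_inter_eq_empty.1 hd] at hss
    exact absurd (subset_empty.1 hss) (Finset.nonempty_iff_ne_empty.1 hS)
  -- β atoms within A biUnion to A
  have hbiUnion : ∀ A ∈ α, (β.filter (fun B => B ⊆ A)).biUnion id = A := by
    intro A hA
    ext i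
    simp only [mem_biUnion, mem_filter, id]
    constructor
    · rintro ⟨B, ⟨_, hBA⟩, hiB⟩; exact hBA hiB
    · intro hiA
      obtain ⟨B, hB, hiB⟩ := hβ3 i
      obtain ⟨A', hA', hBA'⟩ := hfine B hB
      have hAA : A' = A := huniq hA' hA (Finset.singleton_nonempty i)
        (Finset.singleton_subset_iff.2 (hBA' hiB)) (Finset.singleton_subset_iff.2 hiA)
      exact ⟨B, ⟨hB, hAA ▸ hBA'⟩, hiB⟩
  have hdown := dyadic_down hβK hβ1 hBk hBbar hsplit
  have hup := dyadic_up hβ0 hα1 hα2 hBk hBbar hsplit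
  have hN1 : ∀ k, k ≤ K → ∀ B ∈ βs k, 1 ≤ (β.filter (fun B' => B' ⊆ B)).card := by
    intro k hk B hB
    obtain ⟨B0, hB0, hB0s⟩ := (hdown k hk).1 B hB
    exact card_pos.2 ⟨B0, mem_filter.2 ⟨hB0, hB0s⟩⟩
  have hNA1 : ∀ A ∈ α, 1 ≤ (β.filter (fun B' => B' ⊆ A)).card := by
    intro A hA; exact hN1 0 (Nat.zero_le K) A (by rw [hβ0]; exact hA)
  have hK1 : 0 < K := by
    rcases Nat.eq_zero_or_pos K with h0 | h
    · subst h0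
      exact (hstrict (hβ0.symm.trans hβK)).elim
    · exact h
  have hcount : ∀ k, k < K →
      (β.filter (fun B => B ⊆ Bbar k)).card + (β.filter (fun B => B ⊆ Bk k \ Bbar k)).card
        = (β.filter (fun B => B ⊆ Bk k)).card :=
    fun k hk => dyadic_count hβK hβ1 hBk hBbar hsplit (fun k' hk' => (hup k' hk').2) hk
  have hqle1 : ∀ A ∈ α, q A ≤ 1 := by
    intro A hA
    rw [← hq1]
    exact Finset.single_le_sum (fun A' hA' => (hq0 A' hA').le) hA
  have hmin0 : ∀ A ∈ α, 0 ≤ min (-(q A) * Real.log (q A)) (Real.exp 1)⁻¹ := by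
    intro A hA
    apply le_min
    · have h1 := Real.log_nonpos (hq0 A hA).le (hqle1 A hA)
      nlinarith [hq0 A hA]
    · positivity
  -- ζ ≥ log 2
  have hζlog2 : ∀ k, k < K → Real.log 2 ≤ ζ k := by
    intro k hk
    rw [hζ k hk]
    refine le_max_of_le_left ?_
    obtain ⟨hAkα, _⟩ := hAk k hk
    have hq0' := hq0 _ hAkα
    have hn1 : 1 ≤ (β.filter (fun B => B ⊆ Bbar k)).card :=
      hN1 (k+1) (by omega) (Bbar k) (by rw [hsplit k hk]; exact mem_insert_self _ _)
    have hlogmax : 0 ≤ Real.log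
        ((max ((β.filter (fun B => B ⊆ Bbar k)).card)
          ((β.filter (fun B => B ⊆ Bk k \ Bbar k)).card) : ℕ) : ℝ) := by
      apply Real.log_nonneg
      have : 1 ≤ max ((β.filter (fun B => B ⊆ Bbar k)).card)
          ((β.filter (fun B => B ⊆ Bk k \ Bbar k)).card) := le_trans hn1 (le_max_left _ _)
      exact_mod_cast this
    have hm := hmin0 _ hAkα
    nlinarith [mul_nonneg hq0'.le hlogmax]
  set C : ℝ := ∑ A ∈ α, q A * Real.log ((β.filter (fun B => B ⊆ A)).card : ℝ) with hCdef
  have hterm0 : ∀ A ∈ α, 0 ≤ q A * Real.log ((β.filter (fun B => B ⊆ A)).card : ℝ) := by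
    intro A hA
    apply mul_nonneg (hq0 A hA).le
    apply Real.log_nonneg
    exact_mod_cast hNA1 A hA
  have hBk0α : Bk 0 ∈ α := by rw [← hβ0]; exact hBk 0 hK1
  have hNBk0 : 2 ≤ (β.filter (fun B => B ⊆ Bk 0)).card := by
    have h := hcount 0 hK1
    have h1 : 1 ≤ (β.filter (fun B => B ⊆ Bbar 0)).card :=
      hN1 1 hK1 (Bbar 0) (by rw [hsplit 0 hK1]; exact mem_insert_self _ _)
    have h2 : 1 ≤ (β.filter (fun B => B ⊆ Bk 0 \ Bbar 0)).card :=
      hN1 1 hK1 (Bk 0 \ Bbar 0) (by rw [hsplit 0 hK1]; exact mem_insert_of_mem (mem_insert_self _ _))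
    omega
  have hCpos : 0 < C := by
    have hle : q (Bk 0) * Real.log ((β.filter (fun B => B ⊆ Bk 0)).card : ℝ) ≤ C :=
      Finset.single_le_sum hterm0 hBk0α
    have hpos : 0 < q (Bk 0) * Real.log ((β.filter (fun B => B ⊆ Bk 0)).card : ℝ) := by
      apply mul_pos (hq0 _ hBk0α)
      apply Real.log_pos
      exact_mod_cast hNBk0
    linarith
  -- probability part
  have haeG : ∀ᵐ ω ∂μ, ∀ i, 0 < G i ω :=
    (MeasureTheory.ae_all_iff).2 fun i => exp_pos_ae μ (G i) (hGmeas i) (hGexp i)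
  have hbound : ∀ᵐ ω ∂μ, 0 ≤ Δ ω ∧ Δ ω ≤ C := by
    filter_upwards [haeG] with ω hω
    have hbnd : ∀ A ∈ α,
        -(q A) * Real.log ((β.filter (fun B => B ⊆ A)).card : ℝ) ≤
          (∑ B ∈ β.filter (fun B => B ⊆ A), P B ω * Real.log (P B ω / q A)) ∧
        (∑ B ∈ β.filter (fun B => B ⊆ A), P B ω * Real.log (P B ω / q A)) ≤ 0 := by
      intro A hA
      have hTA : 0 < ∑ i ∈ A, G i ω := Finset.sum_pos (fun i _ => hω i) (hα1 A hA)
      have hppos : ∀ B ∈ β.filter (fun B => B ⊆ A), 0 < P B ω := by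
        intro B hB
        obtain ⟨hBβ, hBA⟩ := mem_filter.1 hB
        rw [hP A hA B hBA ω]
        exact div_pos (mul_pos (hq0 A hA) (Finset.sum_pos (fun i _ => hω i) (hβ1 B hBβ))) hTA
      have hpairwise : (↑(β.filter (fun B => B ⊆ A)) : Set (Finset I)).PairwiseDisjoint id := by
        intro x hx y hy hxy
        simp only [coe_filter, Set.mem_setOf_eq] at hx hy
        exact hβ2 x hx.1 y hy.1 hxy
      have hsumS : ∑ B ∈ β.filter (fun B => B ⊆ A), (∑ i ∈ B, G i ω) = ∑ i ∈ A, G i ω := by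
        conv_rhs => rw [← hbiUnion A hA]
        exact (Finset.sum_biUnion hpairwise).symm
      have hsump : ∑ B ∈ β.filter (fun B => B ⊆ A), P B ω = q A := by
        have step : ∀ B ∈ β.filter (fun B => B ⊆ A),
            P B ω = (q A / (∑ i ∈ A, G i ω)) * ∑ i ∈ B, G i ω := by
          intro B hB
          rw [hP A hA B (mem_filter.1 hB).2 ω]
          ring
        rw [Finset.sum_congr rfl step, ← Finset.mul_sum, hsumS]
        field_simp
      exact ⟨entropy_lower _ _ _ (hq0 A hA) hppos hsump,
        entropy_upper _ _ _ (hq0 A hA) hppos hsump⟩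
    constructor
    · rw [hΔ ω]
      have h1 : ∑ A ∈ α, (-(q A) * Real.log ((β.filter (fun B => B ⊆ A)).card : ℝ)) ≤
          ∑ A ∈ α, ∑ B ∈ β.filter (fun B => B ⊆ A), P B ω * Real.log (P B ω / q A) :=
        Finset.sum_le_sum (fun A hA => (hbnd A hA).1)
      have h2 : ∑ A ∈ α, (-(q A) * Real.log ((β.filter (fun B => B ⊆ A)).card : ℝ)) = -C := by
        rw [hCdef, ← Finset.sum_neg_distrib]
        exact Finset.sum_congr rfl (fun A _ => by ring)
      linarith
    · rw [hΔ ω]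
      have h1 : ∑ A ∈ α, ∑ B ∈ β.filter (fun B => B ⊆ A), P B ω * Real.log (P B ω / q A) ≤ 0 :=
        Finset.sum_nonpos (fun A hA => (hbnd A hA).2)
      linarith
  have hPmeas : ∀ A ∈ α, ∀ B ∈ β.filter (fun B => B ⊆ A), Measurable (P B) := by
    intro A hA B hB
    have heq : P B = fun ω => q A * (∑ i ∈ B, G i ω) / (∑ i ∈ A, G i ω) :=
      funext (hP A hA B (mem_filter.1 hB).2)
    rw [heq]
    exact (measurable_const.mul (Finset.measurable_sum _ fun i _ => hGmeas i)).div
      (Finset.measurable_sum _ fun i _ => hGmeas i)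
  have hΔmeas : Measurable Δ := by
    have hΔeq : Δ = fun ω => C + ∑ A ∈ α, ∑ B ∈ β.filter (fun B => B ⊆ A),
        P B ω * Real.log (P B ω / q A) := funext fun ω => hΔ ω
    rw [hΔeq]
    apply Measurable.add measurable_const
    apply Finset.measurable_sum
    intro A hA
    apply Finset.measurable_sum
    intro B hB
    exact (hPmeas A hA B hB).mul (Real.measurable_log.comp ((hPmeas A hA B hB).div_const _))
  have hconc := concentration_of_bounded μ hΔmeas hCpos hbound hlam
  -- combinatorial bound : C^2 ≤ σ2
  set σ2 : ℝ := ∑ k ∈ Finset.range K, ζ k ^ 2 with hσ2def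
  set α₂ : Finset (Finset I) := α.filter (fun A => 2 ≤ (β.filter (fun B => B ⊆ A)).card)
    with hα₂def
  have htopex : ∀ A ∈ α₂, ∃ k, k < K ∧ Bk k = A := by
    intro A hA₂
    obtain ⟨hA, hNA2⟩ := mem_filter.1 hA₂
    by_contra hcon
    push_neg at hcon
    have hstay : ∀ k, k ≤ K → A ∈ βs k := by
      intro k
      induction k with
      | zero => intro _; rw [hβ0]; exact hA
      | succ k ih =>
        intro hk
        have hkK : k < K := by omega
        rw [hsplit k hkK]
        refine mem_insert_of_mem (mem_insert_of_mem (mem_erase.2 ⟨?_, ih (by omega)⟩))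
        exact fun hh => (hcon k hkK) hh.symm
    have hAβ : A ∈ β := by rw [← hβK]; exact hstay K le_rfl
    have hsingle : β.filter (fun B => B ⊆ A) = {A} := by
      ext B0
      simp only [mem_filter, mem_singleton]
      constructor
      · rintro ⟨hB0, hB0A⟩
        by_contra hne
        have hd := hβ2 B0 hB0 A hAβ hne
        have hss : B0 ⊆ B0 ∩ A := subset_inter subset_rfl hB0A
        rw [Finset.disjoint_iff_inter_eq_empty.1 hd] at hss
        exact absurd (subset_empty.1 hss) (Finset.nonempty_iff_ne_empty.1 (hβ1 B0 hB0))
      · rintro rfl; exact ⟨hAβ, subset_rfl⟩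
    rw [hsingle] at hNA2
    simp at hNA2
  set kOf : Finset I → ℕ := fun A => if h : ∃ k, k < K ∧ Bk k = A then h.choose else 0
    with hkOfdef
  have hkOfspec : ∀ A ∈ α₂, kOf A < K ∧ Bk (kOf A) = A := by
    intro A hA₂
    have h := htopex A hA₂
    simp only [hkOfdef, dif_pos h]
    exact h.choose_spec
  have hinj : ∀ A ∈ α₂, ∀ A' ∈ α₂, kOf A = kOf A' → A = A' := by
    intro A hA A' hA' heq
    have h1 := (hkOfspec A hA).2
    have h2 := (hkOfspec A' hA').2
    rw [← h1, ← h2, heq]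
  set T : Finset ℕ := α₂.image kOf with hTdef
  have hTsub : T ⊆ Finset.range K := by
    intro k hk
    obtain ⟨A, hA, rfl⟩ := mem_image.1 hk
    exact mem_range.2 (hkOfspec A hA).1
  have hTcard : T.card = α₂.card := card_image_of_injOn (fun A hA A' hA' h =>
    hinj A (by exact_mod_cast hA) A' (by exact_mod_cast hA') h)
  have hsumT : ∑ k ∈ T, ζ k ^ 2 = ∑ A ∈ α₂, ζ (kOf A) ^ 2 :=
    Finset.sum_image hinj
  -- ζ top bound
  have hζtop : ∀ A ∈ α₂,
      q A * Real.log ((β.filter (fun B => B ⊆ A)).card : ℝ) + (1 - q A) * Real.log 2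
        ≤ ζ (kOf A) := by
    intro A hA₂
    obtain ⟨hA, hNA2⟩ := mem_filter.1 hA₂
    obtain ⟨hkK, hBkA⟩ := hkOfspec A hA₂
    set k := kOf A with hkdef
    have hAkA : Ak k = A := by
      obtain ⟨hAkα, hsubAk⟩ := hAk k hkK
      exact (huniq hA hAkα (hα1 A hA) subset_rfl (hBkA ▸ hsubAk)).symm
    have hcnt0 := hcount k hkK
    have hcnt : (β.filter (fun B => B ⊆ Bbar k)).card
        + (β.filter (fun B => B ⊆ Bk k \ Bbar k)).card
        = (β.filter (fun B => B ⊆ A)).card := by rw [← hBkA]; exact hcnt0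
    have hn1 : 1 ≤ (β.filter (fun B => B ⊆ Bbar k)).card :=
      hN1 (k+1) (by omega) (Bbar k) (by rw [hsplit k hkK]; exact mem_insert_self _ _)
    have hn2 : 1 ≤ (β.filter (fun B => B ⊆ Bk k \ Bbar k)).card :=
      hN1 (k+1) (by omega) (Bk k \ Bbar k)
        (by rw [hsplit k hkK]; exact mem_insert_of_mem (mem_insert_self _ _))
    set m : ℕ := max ((β.filter (fun B => B ⊆ Bbar k)).card)
      ((β.filter (fun B => B ⊆ Bk k \ Bbar k)).card) with hmdef
    have hm1 : 1 ≤ m := le_trans hn1 (le_max_left _ _)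
    have hmax2 : ((β.filter (fun B => B ⊆ A)).card : ℝ) ≤ 2 * (m : ℝ) := by
      have h2 : (β.filter (fun B => B ⊆ A)).card ≤ 2 * m := by
        have hl := le_max_left ((β.filter (fun B => B ⊆ Bbar k)).card)
          ((β.filter (fun B => B ⊆ Bk k \ Bbar k)).card)
        have hr := le_max_right ((β.filter (fun B => B ⊆ Bbar k)).card)
          ((β.filter (fun B => B ⊆ Bk k \ Bbar k)).card)
        rw [hmdef]
        omega
      exact_mod_cast h2
    have hlogmax : Real.log ((β.filter (fun B => B ⊆ A)).card : ℝ) - Real.log 2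
        ≤ Real.log (m : ℝ) := by
      have hcard0 : (0:ℝ) < ((β.filter (fun B => B ⊆ A)).card : ℝ) := by
        exact_mod_cast lt_of_lt_of_le Nat.zero_lt_two hNA2
      have h1 : Real.log ((β.filter (fun B => B ⊆ A)).card : ℝ) ≤ Real.log (2 * (m:ℝ)) :=
        Real.log_le_log hcard0 hmax2
      rw [Real.log_mul two_ne_zero (by exact_mod_cast Nat.one_le_iff_ne_zero.1 hm1)] at h1
      linarith
    rw [hζ k hkK]
    refine le_max_of_le_left ?_
    rw [hAkA, ← hmdef]
    have hminA := hmin0 A hA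
    have hqA := hq0 A hA
    have hmul := mul_le_mul_of_nonneg_left hlogmax hqA.le
    linarith [hmul, hminA]
  -- counting : β.card = ∑ N_A
  have hβcard : β.card = ∑ A ∈ α, (β.filter (fun B => B ⊆ A)).card := by
    have hβeq : β = α.biUnion (fun A => β.filter (fun B => B ⊆ A)) := by
      ext B
      simp only [mem_biUnion, mem_filter]
      constructor
      · intro hB
        obtain ⟨A, hA, hBA⟩ := hfine B hB
        exact ⟨A, hA, hB, hBA⟩
      · rintro ⟨A, hA, hB, _⟩; exact hB
    conv_lhs => rw [hβeq]
    apply card_biUnion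
    intro A hA A' hA' hne
    rw [Function.onFun, Finset.disjoint_left]
    intro B hB hB'
    obtain ⟨hBβ, hBA⟩ := mem_filter.1 hB
    obtain ⟨_, hBA'⟩ := mem_filter.1 hB'
    exact hne (huniq hA hA' (hβ1 B hBβ) hBA hBA')
  have hαβcard : α.card ≤ β.card := by
    rw [hβcard]
    calc α.card = ∑ _A ∈ α, 1 := by simp
      _ ≤ ∑ A ∈ α, (β.filter (fun B => B ⊆ A)).card := Finset.sum_le_sum hNA1
  have hKreal : (K : ℝ) = ∑ A ∈ α, (((β.filter (fun B => B ⊆ A)).card : ℝ) - 1) := by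
    rw [hK, Nat.cast_sub hαβcard, hβcard]
    rw [Finset.sum_sub_distrib]
    push_cast
    simp
  -- relating sums over α and α₂
  have hofff : ∀ A ∈ α, A ∉ α₂ → (β.filter (fun B => B ⊆ A)).card = 1 := by
    intro A hA hA₂
    have h2 : ¬ 2 ≤ (β.filter (fun B => B ⊆ A)).card := by
      intro hcon
      exact hA₂ (mem_filter.2 ⟨hA, hcon⟩)
    have := hNA1 A hA
    omega
  have hCα₂ : C = ∑ A ∈ α₂, q A * Real.log ((β.filter (fun B => B ⊆ A)).card : ℝ) := by
    rw [hCdef, hα₂def]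
    rw [Finset.sum_filter_of_ne]
    intro A hA hne
    by_contra hcon
    have h1 : (β.filter (fun B => B ⊆ A)).card = 1 := by
      have := hNA1 A hA
      omega
    rw [h1] at hne
    simp at hne
  have hKα₂ : ∑ A ∈ α₂, (((β.filter (fun B => B ⊆ A)).card : ℝ) - 2)
      = (K : ℝ) - α₂.card := by
    have h1 : ∑ A ∈ α₂, (((β.filter (fun B => B ⊆ A)).card : ℝ) - 1)
        = (K : ℝ) := by
      rw [hKreal, hα₂def]
      rw [Finset.sum_filter_of_ne]
      intro A hA hne
      by_contra hcon
      have h2 : (β.filter (fun B => B ⊆ A)).card = 1 := by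
        have := hNA1 A hA
        omega
      rw [h2] at hne
      simp at hne
    have h2 : ∑ A ∈ α₂, (((β.filter (fun B => B ⊆ A)).card : ℝ) - 2)
        = (∑ A ∈ α₂, (((β.filter (fun B => B ⊆ A)).card : ℝ) - 1)) - α₂.card := by
      rw [Finset.sum_sub_distrib, Finset.sum_sub_distrib]
      simp [Finset.sum_const]
      ring
    rw [h2, h1]
  -- Cauchy-Schwarz
  have hCS : C ^ 2 ≤ ∑ A ∈ α₂, q A * (Real.log ((β.filter (fun B => B ⊆ A)).card : ℝ))^2 := by
    have hcs := Finset.sum_mul_sq_le_sq_mul_sq α₂ (fun A => Real.sqrt (q A))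
      (fun A => Real.sqrt (q A) * Real.log ((β.filter (fun B => B ⊆ A)).card : ℝ))
    have hL : ∑ A ∈ α₂, Real.sqrt (q A) *
        (Real.sqrt (q A) * Real.log ((β.filter (fun B => B ⊆ A)).card : ℝ)) =
        ∑ A ∈ α₂, q A * Real.log ((β.filter (fun B => B ⊆ A)).card : ℝ) := by
      apply Finset.sum_congr rfl
      intro A hA
      rw [← mul_assoc, Real.mul_self_sqrt (hq0 A (mem_filter.1 hA).1).le]
    have hR1 : ∑ A ∈ α₂, (Real.sqrt (q A))^2 = ∑ A ∈ α₂, q A := by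
      apply Finset.sum_congr rfl
      intro A hA
      exact Real.sq_sqrt (hq0 A (mem_filter.1 hA).1).le
    have hR2 : ∑ A ∈ α₂, (Real.sqrt (q A) * Real.log ((β.filter (fun B => B ⊆ A)).card : ℝ))^2
        = ∑ A ∈ α₂, q A * (Real.log ((β.filter (fun B => B ⊆ A)).card : ℝ))^2 := by
      apply Finset.sum_congr rfl
      intro A hA
      rw [mul_pow, Real.sq_sqrt (hq0 A (mem_filter.1 hA).1).le]
    rw [hL, hR1, hR2] at hcs
    have hqsum : ∑ A ∈ α₂, q A ≤ 1 := by
      rw [← hq1, hα₂def]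
      exact Finset.sum_le_sum_of_subset_of_nonneg (filter_subset _ _)
        (fun A hA _ => (hq0 A hA).le)
    have hnonneg : 0 ≤ ∑ A ∈ α₂, q A * (Real.log ((β.filter (fun B => B ⊆ A)).card : ℝ))^2 := by
      apply Finset.sum_nonneg
      intro A hA
      exact mul_nonneg (hq0 A (mem_filter.1 hA).1).le (sq_nonneg _)
    calc C ^ 2 = (∑ A ∈ α₂, q A * Real.log ((β.filter (fun B => B ⊆ A)).card : ℝ))^2 := by
          rw [hCα₂]
      _ ≤ (∑ A ∈ α₂, q A) * ∑ A ∈ α₂, q A * (Real.log ((β.filter (fun B => B ⊆ A)).card : ℝ))^2 := hcs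
      _ ≤ 1 * ∑ A ∈ α₂, q A * (Real.log ((β.filter (fun B => B ⊆ A)).card : ℝ))^2 :=
          mul_le_mul_of_nonneg_right hqsum hnonneg
      _ = _ := one_mul _
  -- per-atom bound
  have hperatom : ∀ A ∈ α₂,
      q A * (Real.log ((β.filter (fun B => B ⊆ A)).card : ℝ))^2 ≤
        ζ (kOf A) ^ 2 + (((β.filter (fun B => B ⊆ A)).card : ℝ) - 2) * (Real.log 2)^2 := by
    intro A hA₂
    obtain ⟨hA, hNA2⟩ := mem_filter.1 hA₂
    have hstar := star_ineq hNA2 (hq0 A hA) (hqle1 A hA)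
    have hy0 : 0 ≤ q A * Real.log ((β.filter (fun B => B ⊆ A)).card : ℝ)
        + (1 - q A) * Real.log 2 := by
      have h1 : 0 ≤ Real.log ((β.filter (fun B => B ⊆ A)).card : ℝ) :=
        Real.log_nonneg (by exact_mod_cast hNA1 A hA)
      have h2 : 0 ≤ Real.log 2 := Real.log_nonneg one_le_two
      have := hqle1 A hA
      have := hq0 A hA
      nlinarith
    have hsq : (q A * Real.log ((β.filter (fun B => B ⊆ A)).card : ℝ)
        + (1 - q A) * Real.log 2)^2 ≤ ζ (kOf A) ^ 2 :=
      pow_le_pow_left₀ hy0 (hζtop A hA₂) 2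
    calc q A * (Real.log ((β.filter (fun B => B ⊆ A)).card : ℝ))^2
        ≤ (q A * Real.log ((β.filter (fun B => B ⊆ A)).card : ℝ)
            + (1 - q A) * Real.log 2)^2
          + (((β.filter (fun B => B ⊆ A)).card : ℝ) - 2) * (Real.log 2)^2 := hstar
      _ ≤ ζ (kOf A) ^ 2 + (((β.filter (fun B => B ⊆ A)).card : ℝ) - 2) * (Real.log 2)^2 := by
          linarith [hsq]
  -- sum of low bounds on remaining ζ's
  have hrest : ((K : ℝ) - α₂.card) * (Real.log 2)^2 ≤ ∑ k ∈ Finset.range K \ T, ζ k ^ 2 := by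
    have hcard : ((Finset.range K \ T).card : ℝ) = (K : ℝ) - α₂.card := by
      rw [card_sdiff_of_subset hTsub, card_range, hTcard]
      have : α₂.card ≤ K := by
        rw [← hTcard, ← card_range K]
        exact card_le_card hTsub
      rw [Nat.cast_sub this]
    have hterm : ∀ k ∈ Finset.range K \ T, (Real.log 2)^2 ≤ ζ k ^ 2 := by
      intro k hk
      have hkK : k < K := mem_range.1 (mem_sdiff.1 hk).1
      exact pow_le_pow_left₀ (Real.log_nonneg one_le_two) (hζlog2 k hkK) 2
    calc ((K : ℝ) - α₂.card) * (Real.log 2)^2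
        = ((Finset.range K \ T).card : ℝ) * (Real.log 2)^2 := by rw [hcard]
      _ = ∑ _k ∈ Finset.range K \ T, (Real.log 2)^2 := by
          rw [Finset.sum_const, nsmul_eq_mul]
      _ ≤ ∑ k ∈ Finset.range K \ T, ζ k ^ 2 := Finset.sum_le_sum hterm
  -- assemble C^2 ≤ σ2
  have hfinal : C ^ 2 ≤ σ2 := by
    have h1 : C ^ 2 ≤ ∑ A ∈ α₂, (ζ (kOf A) ^ 2
        + (((β.filter (fun B => B ⊆ A)).card : ℝ) - 2) * (Real.log 2)^2) :=
      hCS.trans (Finset.sum_le_sum hperatom)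
    have h2 : ∑ A ∈ α₂, (ζ (kOf A) ^ 2
        + (((β.filter (fun B => B ⊆ A)).card : ℝ) - 2) * (Real.log 2)^2)
        = (∑ A ∈ α₂, ζ (kOf A) ^ 2) + ((K : ℝ) - α₂.card) * (Real.log 2)^2 := by
      rw [Finset.sum_add_distrib, ← Finset.sum_mul, hKα₂]
    have h3 : σ2 = (∑ k ∈ T, ζ k ^ 2) + ∑ k ∈ Finset.range K \ T, ζ k ^ 2 := by
      rw [hσ2def, ← Finset.sum_sdiff hTsub]
      ring
    rw [h3, hsumT]
    linarith [hrest, h1, h2.le, h2.ge]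
  -- final comparison of exponents
  have hσpos : 0 < σ2 := lt_of_lt_of_le (by positivity) hfinal
  refine hconc.trans (ENNReal.ofReal_le_ofReal (Real.exp_le_exp.2 ?_))
  rw [neg_div, neg_div]
  apply neg_le_neg
  rw [div_le_div_iff₀ (by positivity) (by positivity)]
  nlinarith [hfinal, sq_nonneg lam]
end

section
/- Let I be a finite set of 61 elements and α a partition of I into 20 atoms consisting of 2 atoms of size 1, 9 atoms of size 2, 1 atom of size 3, 5 atoms of size 4, and 3 atoms of size 6 (the amino acid partition of the 61 coding codons under the standard genetic code). Let q = (q_A : A ∈ α) be a probability vector with 0 < q_A < e⁻¹ for all A ∈ α, and let P be the random extension of q built by normalizing independent rate-1 exponential random variables within each atom (P_i = q_A·G_i/Σ_{j∈A}G_j for i ∈ A). Let Δ = Σ_{A∈α} q_A·log|A| + Σ_{i∈I} P_i·log(P_i/q_{A^i}). Then for all λ > 0, P(Δ ≤ E(Δ) − λ) ≤ exp(−λ²/(2·z(q))), where z(q) = Σ_{A: |A|∈{2,3}} G(A,1)² + 2·Σ_{A: |A|∈{4,6}} G(A,1)² + Σ_{A: |A|∈{3,4}} G(A,2)² + 2·Σ_{A: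 |A|=6} G(A,2)² + Σ_{A: |A|=6} G(A,3)², with G(A,t) = q_A·log t + log 2 − q_A·log q_A. -/
open Finset MeasureTheory ProbabilityTheory

/-- `G(A, t) = q_A·log t + log 2 − q_A·log q_A`. -/
noncomputable def Gfun {I : Type*} [Fintype I] [DecidableEq I]
    (q : Finset I → ℝ) (A : Finset I) (t : ℕ) : ℝ :=
  q A * Real.log (t : ℝ) + Real.log 2 - q A * Real.log (q A)

lemma aux_mul_log_ge (p qa : ℝ) (hp : 0 < p) (hq : 0 < qa) :
    p - qa ≤ p * Real.log (p / qa) := by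
  have h := Real.log_le_sub_one_of_pos (show 0 < qa / p by positivity)
  have hlog : Real.log (qa / p) = - Real.log (p / qa) := by
    rw [Real.log_div hq.ne' hp.ne', Real.log_div hp.ne' hq.ne']; ring
  rw [hlog] at h
  have h2 : qa / p * p = qa := by field_simp
  nlinarith

lemma aux_integrable_exp {Ω : Type*} [MeasurableSpace Ω] (μ : Measure Ω) [IsProbabilityMeasure μ]
    (X : Ω → ℝ) (hXm : Measurable X) (W t : ℝ)
    (hb : ∀ᵐ ω ∂μ, |X ω| ≤ W) :
    Integrable (fun ω => Real.exp (t * X ω)) μ := by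
  refine Integrable.mono' (integrable_const (Real.exp (|t| * W)))
    (Real.measurable_exp.comp (measurable_const.mul hXm)).aestronglyMeasurable
    (hb.mono fun ω h => ?_)
  rw [Real.norm_eq_abs, Real.abs_exp]
  refine Real.exp_le_exp.mpr ?_
  calc t * X ω ≤ |t * X ω| := le_abs_self _
    _ = |t| * |X ω| := abs_mul _ _
    _ ≤ |t| * W := by
        have h0 : (0:ℝ) ≤ |t| := abs_nonneg _
        nlinarith [abs_nonneg (X ω)]

lemma aux_mgf_le {Ω : Type*} [MeasurableSpace Ω] (μ : Measure Ω) [IsProbabilityMeasure μ]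
    (X : Ω → ℝ) (hXm : Measurable X) (W t : ℝ) (hW : 0 < W)
    (hb : ∀ᵐ ω ∂μ, |X ω| ≤ W) (hXint : Integrable X μ) (h0 : ∫ ω, X ω ∂μ = 0) :
    ∫ ω, Real.exp (t * X ω) ∂μ ≤ Real.exp (t ^ 2 * W ^ 2 / 2) := by
  set c1 : ℝ := (Real.exp (t * W) - Real.exp (-(t * W))) / (2 * W) with hc1
  set c2 : ℝ := (Real.exp (-(t * W)) + Real.exp (t * W)) / 2 with hc2
  have key : ∀ x : ℝ, |x| ≤ W → Real.exp (t * x) ≤ c1 * x + c2 := by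
    intro x hx
    rcases abs_le.mp hx with ⟨hx1, hx2⟩
    have ha : (0:ℝ) ≤ (W - x) / (2 * W) := div_nonneg (by linarith) (by linarith)
    have hb' : (0:ℝ) ≤ (W + x) / (2 * W) := div_nonneg (by linarith) (by linarith)
    have hab : (W - x) / (2 * W) + (W + x) / (2 * W) = 1 := by field_simp; ring
    have hcvx := convexOn_exp.2 (Set.mem_univ (-(t * W))) (Set.mem_univ (t * W)) ha hb' hab
    simp only [smul_eq_mul] at hcvx
    have harg : (W - x) / (2 * W) * (-(t * W)) + (W + x) / (2 * W) * (t * W) = t * x := by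
      field_simp; ring
    rw [harg] at hcvx
    refine hcvx.trans_eq ?_
    rw [hc1, hc2]; field_simp; ring
  have hint_lhs : Integrable (fun ω => Real.exp (t * X ω)) μ :=
    aux_integrable_exp μ X hXm W t hb
  have hle : ∫ ω, Real.exp (t * X ω) ∂μ ≤ ∫ ω, (c1 * X ω + c2) ∂μ :=
    integral_mono_ae hint_lhs ((hXint.const_mul c1).add (integrable_const c2))
      (hb.mono fun ω h => key _ h)
  have heval : ∫ ω, (c1 * X ω + c2) ∂μ = c2 := by
    have hmul : ∫ a, c1 * X a ∂μ = c1 * ∫ a, X a ∂μ := by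
      simpa [smul_eq_mul] using integral_smul c1 X
    rw [integral_add (hXint.const_mul c1) (integrable_const c2), hmul, h0, integral_const]
    simp
  have hcosh : c2 = Real.cosh (t * W) := by
    rw [Real.cosh_eq, hc2]; ring_nf
  calc ∫ ω, Real.exp (t * X ω) ∂μ ≤ c2 := by rw [← heval]; exact hle
    _ = Real.cosh (t * W) := hcosh
    _ ≤ Real.exp ((t * W) ^ 2 / 2) := Real.cosh_le_exp_half_sq _
    _ = Real.exp (t ^ 2 * W ^ 2 / 2) := by rw [mul_pow]

lemma aux_exp_pos {Ω : Type*} [MeasurableSpace Ω] (μ : Measure Ω)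
    (Y : Ω → ℝ) (hm : Measurable Y) (hexp : Measure.map Y μ = expMeasure 1) :
    ∀ᵐ ω ∂μ, 0 < Y ω := by
  have hmap : μ (Y ⁻¹' (Set.Iic 0)) = (expMeasure 1) (Set.Iic 0) := by
    rw [← hexp, Measure.map_apply hm measurableSet_Iic]
  have hexp0 : (expMeasure 1) (Set.Iic 0) = 0 := by
    rw [expMeasure, gammaMeasure, MeasureTheory.withDensity_apply _ measurableSet_Iic]
    have h := lintegral_exponentialPDF_eq_antiDeriv (r := 1) one_pos 0
    have hpdf : gammaPDF 1 1 = exponentialPDF 1 := rfl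
    rw [hpdf, h]
    norm_num
  refine MeasureTheory.ae_iff.mpr ?_
  have hs : {ω | ¬ 0 < Y ω} = Y ⁻¹' (Set.Iic 0) := by
    ext ω; simp [not_lt]
  rw [hs, hmap, hexp0]

set_option maxHeartbeats 2000000 in
/-- Corollary 4: for the amino acid partition of the 61 coding
codons (2 atoms of size 1, 9 of size 2, 1 of size 3, 5 of size 4, 3 of size 6),
a probability vector `q` with `0 < q_A < e⁻¹`, and `P` the random extension of
`q` built from independent rate-1 exponentials, for all `λ > 0`,
`ℙ(Δ ≤ E(Δ) − λ) ≤ exp(−λ²/(2 z(q)))`, where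
`z(q) = Σ_{|A|∈{2,3}} G(A,1)² + 2Σ_{|A|∈{4,6}} G(A,1)² + Σ_{|A|∈{3,4}} G(A,2)²
        + 2Σ_{|A|=6} G(A,2)² + Σ_{|A|=6} G(A,3)²`. -/
theorem azuma_hoeffding_codons
    {I : Type*} [Fintype I] [DecidableEq I] (hI : Fintype.card I = 61)
    {Ω : Type*} [MeasurableSpace Ω] (μ : Measure Ω) [IsProbabilityMeasure μ]
    (α : Finset (Finset I)) (hα : IsPartition α) (hα20 : α.card = 20)
    (h1 : (α.filter (fun A => A.card = 1)).card = 2)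
    (h2 : (α.filter (fun A => A.card = 2)).card = 9)
    (h3 : (α.filter (fun A => A.card = 3)).card = 1)
    (h4 : (α.filter (fun A => A.card = 4)).card = 5)
    (h6 : (α.filter (fun A => A.card = 6)).card = 3)
    (q : Finset I → ℝ)
    (hq0 : ∀ A ∈ α, 0 < q A) (hqe : ∀ A ∈ α, q A < (Real.exp 1)⁻¹)
    (hq1 : ∑ A ∈ α, q A = 1)
    (atα : I → Finset I) (hatα : ∀ i : I, atα i ∈ α ∧ i ∈ atα i)
    (G : I → Ω → ℝ) (hGmeas : ∀ i, Measurable (G i))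
    (hGindep : iIndepFun G μ)
    (hGexp : ∀ i, Measure.map (G i) μ = expMeasure 1)
    (P : I → Ω → ℝ)
    (hP : ∀ i : I, ∀ ω, P i ω = q (atα i) * G i ω / (∑ j ∈ atα i, G j ω))
    (Δ : Ω → ℝ)
    (hΔ : ∀ ω, Δ ω = ∑ A ∈ α, q A * Real.log (A.card : ℝ) +
      ∑ i : I, P i ω * Real.log (P i ω / q (atα i)))
    (z : ℝ)
    (hz : z = (∑ A ∈ α.filter (fun A => A.card = 2 ∨ A.card = 3), (Gfun q A 1) ^ 2) +
      2 * (∑ A ∈ α.filter (fun A => A.card = 4 ∨ A.card = 6), (Gfun q A 1) ^ 2) +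
      (∑ A ∈ α.filter (fun A => A.card = 3 ∨ A.card = 4), (Gfun q A 2) ^ 2) +
      2 * (∑ A ∈ α.filter (fun A => A.card = 6), (Gfun q A 2) ^ 2) +
      (∑ A ∈ α.filter (fun A => A.card = 6), (Gfun q A 3) ^ 2))
    (lam : ℝ) (hlam : 0 < lam) :
    μ {ω | Δ ω ≤ (∫ ω', Δ ω' ∂μ) - lam} ≤
      ENNReal.ofReal (Real.exp (-(lam ^ 2) / (2 * z))) := by
  classical
  obtain ⟨hne, hdisj, hcov⟩ := hα
  -- atom uniqueness
  have hat : ∀ A ∈ α, ∀ i ∈ A, atα i = A := by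
    intro A hA i hi
    by_contra h
    exact (Finset.disjoint_left.mp (hdisj _ (hatα i).1 _ hA h) (hatα i).2) hi
  -- decomposition of sums over I
  have huniv : (Finset.univ : Finset I) = α.biUnion id := by
    ext i
    simp only [Finset.mem_univ, Finset.mem_biUnion, id, true_iff]
    exact ⟨atα i, (hatα i).1, (hatα i).2⟩
  have hpd : Set.PairwiseDisjoint (↑α : Set (Finset I)) id := fun A hA B hB hAB =>
    hdisj A hA B hB hAB
  have hsumI : ∀ f : I → ℝ, ∑ i : I, f i = ∑ A ∈ α, ∑ i ∈ A, f i := by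
    intro f
    rw [show (∑ i : I, f i) = ∑ i ∈ α.biUnion id, f i by rw [← huniv],
      Finset.sum_biUnion hpd]
    simp only [id_eq]
  -- filter disjointness
  have hfd : ∀ m n : ℕ, m ≠ n →
      Disjoint (α.filter fun A => A.card = m) (α.filter fun A => A.card = n) := by
    intro m n hmn
    rw [Finset.disjoint_left]
    intro A hA hB
    obtain ⟨-, hAm⟩ := Finset.mem_filter.mp hA
    obtain ⟨-, hAn⟩ := Finset.mem_filter.mp hB
    exact hmn (hAm ▸ hAn ▸ rfl)
  have D2 : Disjoint (α.filter fun A => A.card = 1) (α.filter fun A => A.card = 2) :=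
    hfd 1 2 (by norm_num)
  have D3 : Disjoint ((α.filter fun A => A.card = 1) ∪ (α.filter fun A => A.card = 2))
      (α.filter fun A => A.card = 3) :=
    Finset.disjoint_union_left.mpr ⟨hfd 1 3 (by norm_num), hfd 2 3 (by norm_num)⟩
  have D4 : Disjoint ((α.filter fun A => A.card = 1) ∪ (α.filter fun A => A.card = 2) ∪
      (α.filter fun A => A.card = 3)) (α.filter fun A => A.card = 4) :=
    Finset.disjoint_union_left.mpr
      ⟨Finset.disjoint_union_left.mpr ⟨hfd 1 4 (by norm_num), hfd 2 4 (by norm_num)⟩,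
        hfd 3 4 (by norm_num)⟩
  have D6 : Disjoint ((α.filter fun A => A.card = 1) ∪ (α.filter fun A => A.card = 2) ∪
      (α.filter fun A => A.card = 3) ∪ (α.filter fun A => A.card = 4))
      (α.filter fun A => A.card = 6) :=
    Finset.disjoint_union_left.mpr
      ⟨Finset.disjoint_union_left.mpr
        ⟨Finset.disjoint_union_left.mpr ⟨hfd 1 6 (by norm_num), hfd 2 6 (by norm_num)⟩,
          hfd 3 6 (by norm_num)⟩, hfd 4 6 (by norm_num)⟩
  -- the five filters cover α
  have hSeq : (α.filter fun A => A.card = 1) ∪ (α.filter fun A => A.card = 2) ∪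
      (α.filter fun A => A.card = 3) ∪ (α.filter fun A => A.card = 4) ∪
      (α.filter fun A => A.card = 6) = α := by
    refine Finset.eq_of_subset_of_card_le ?_ ?_
    · intro A hA
      simp only [Finset.mem_union, Finset.mem_filter] at hA
      rcases hA with ((((h | h) | h) | h) | h) <;> exact h.1
    · rw [Finset.card_union_of_disjoint D6, Finset.card_union_of_disjoint D4,
        Finset.card_union_of_disjoint D3, Finset.card_union_of_disjoint D2,
        h1, h2, h3, h4, h6, hα20]
  have hsplitα : ∀ g : Finset I → ℝ, ∑ A ∈ α, g A =
      (∑ A ∈ α.filter (fun A => A.card = 1), g A) +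
      (∑ A ∈ α.filter (fun A => A.card = 2), g A) +
      (∑ A ∈ α.filter (fun A => A.card = 3), g A) +
      (∑ A ∈ α.filter (fun A => A.card = 4), g A) +
      (∑ A ∈ α.filter (fun A => A.card = 6), g A) := by
    intro g
    conv_lhs => rw [← hSeq]
    rw [Finset.sum_union D6, Finset.sum_union D4, Finset.sum_union D3, Finset.sum_union D2]
  -- every atom has card in {1,2,3,4,6}
  have hcover : ∀ A ∈ α, A.card = 1 ∨ A.card = 2 ∨ A.card = 3 ∨ A.card = 4 ∨ A.card = 6 := by
    intro A hA
    rw [← hSeq] at hA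
    simp only [Finset.mem_union, Finset.mem_filter] at hA
    tauto
  -- abbreviations
  set L : ℝ := Real.log 2 with hL
  clear_value L
  have hLpos : 0 < L := by rw [hL]; exact Real.log_pos one_lt_two
  have hLlb : 0.6931 < L := by
    have := Real.log_two_gt_d9; rw [hL]; linarith
  have hLub : L < 0.6932 := by
    have := Real.log_two_lt_d9; rw [hL]; linarith
  -- basic facts about q on atoms
  have hqlog : ∀ A ∈ α, Real.log (q A) ≤ -1 := by
    intro A hA
    have h := Real.log_lt_log (hq0 A hA) (hqe A hA)
    rw [Real.log_inv, Real.log_exp] at h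
    linarith
  -- pointwise lower bounds on Gfun squared
  have hGf1 : ∀ A ∈ α, L ^ 2 + 2 * L * q A ≤ (Gfun q A 1) ^ 2 := by
    intro A hA
    have hq := hq0 A hA
    have hl := hqlog A hA
    have hG : L + q A ≤ Gfun q A 1 := by
      rw [Gfun]; push_cast; rw [Real.log_one]
      nlinarith
    have h0 : 0 ≤ L + q A := by linarith
    have := pow_le_pow_left₀ h0 hG 2
    nlinarith [sq_nonneg (q A)]
  have hGf2 : ∀ A ∈ α, L ^ 2 + (2 * L + 2 * L * L) * q A ≤ (Gfun q A 2) ^ 2 := by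
    intro A hA
    have hq := hq0 A hA
    have hl := hqlog A hA
    have hG : L + (1 + L) * q A ≤ Gfun q A 2 := by
      rw [Gfun]; push_cast; rw [← hL]
      nlinarith
    have h0 : 0 ≤ L + (1 + L) * q A := by nlinarith
    have := pow_le_pow_left₀ h0 hG 2
    nlinarith [sq_nonneg ((1 + L) * q A)]
  have hGf3 : ∀ A ∈ α, L ^ 2 + 4 * L * q A ≤ (Gfun q A 3) ^ 2 := by
    intro A hA
    have hq := hq0 A hA
    have hl := hqlog A hA
    have hlog3 : (1:ℝ) ≤ Real.log 3 := by
      have h1 : Real.log (Real.exp 1) ≤ Real.log 3 :=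
        Real.log_le_log (Real.exp_pos 1) (by linarith [Real.exp_one_lt_d9])
      rwa [Real.log_exp] at h1
    have hG : L + 2 * q A ≤ Gfun q A 3 := by
      rw [Gfun]; push_cast; rw [← hL]
      nlinarith
    have h0 : 0 ≤ L + 2 * q A := by linarith
    have := pow_le_pow_left₀ h0 hG 2
    nlinarith [sq_nonneg (q A)]
  -- evaluating linear sums over filters
  have hsum_le : ∀ (k : ℕ) (t : ℕ) (d : ℝ), (∀ A ∈ α, L ^ 2 + d * q A ≤ (Gfun q A t) ^ 2) →
      ((α.filter (fun A => A.card = k)).card : ℝ) * L ^ 2 +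
        d * (∑ A ∈ α.filter (fun A => A.card = k), q A) ≤
        ∑ A ∈ α.filter (fun A => A.card = k), (Gfun q A t) ^ 2 := by
    intro k t d h
    have : ∑ A ∈ α.filter (fun A => A.card = k), (L ^ 2 + d * q A) =
        ((α.filter (fun A => A.card = k)).card : ℝ) * L ^ 2 +
        d * (∑ A ∈ α.filter (fun A => A.card = k), q A) := by
      rw [Finset.sum_add_distrib, Finset.sum_const, ← Finset.mul_sum, nsmul_eq_mul]
    rw [← this]
    exact Finset.sum_le_sum fun A hA => h A (Finset.mem_filter.mp hA).1
  -- partial sums of q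
  have hsnn : ∀ k : ℕ, 0 ≤ ∑ A ∈ α.filter (fun A => A.card = k), q A := fun k =>
    Finset.sum_nonneg fun A hA => (hq0 A (Finset.mem_filter.mp hA).1).le
  have hq1' : (∑ A ∈ α.filter (fun A => A.card = 1), q A) +
      (∑ A ∈ α.filter (fun A => A.card = 2), q A) +
      (∑ A ∈ α.filter (fun A => A.card = 3), q A) +
      (∑ A ∈ α.filter (fun A => A.card = 4), q A) +
      (∑ A ∈ α.filter (fun A => A.card = 6), q A) = 1 := by
    rw [← hsplitα fun A => q A]; exact hq1
  -- w : mean width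
  set w : ℝ := ∑ A ∈ α, q A * ((A.card : ℝ) - 1) with hwdef
  clear_value w
  have hfilt_eval : ∀ k : ℕ, ∑ A ∈ α.filter (fun A => A.card = k), q A * ((A.card : ℝ) - 1) =
      (∑ A ∈ α.filter (fun A => A.card = k), q A) * ((k : ℝ) - 1) := by
    intro k
    rw [Finset.sum_mul]
    refine Finset.sum_congr rfl fun A hA => ?_
    rw [(Finset.mem_filter.mp hA).2]
  have hw : w = (∑ A ∈ α.filter (fun A => A.card = 2), q A) +
      2 * (∑ A ∈ α.filter (fun A => A.card = 3), q A) +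
      3 * (∑ A ∈ α.filter (fun A => A.card = 4), q A) +
      5 * (∑ A ∈ α.filter (fun A => A.card = 6), q A) := by
    rw [hwdef, hsplitα fun A => q A * ((A.card : ℝ) - 1), hfilt_eval 1, hfilt_eval 2,
      hfilt_eval 3, hfilt_eval 4, hfilt_eval 6]
    push_cast; ring
  have hw0 : 0 ≤ w := by
    rw [hw]; have := hsnn 2; have := hsnn 3; have := hsnn 4; have := hsnn 6; linarith
  have hw5 : w ≤ 5 := by
    rw [hw]
    have := hsnn 1; have := hsnn 2; have := hsnn 3; have := hsnn 4; have := hsnn 6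
    linarith
  -- splitting z
  have hzsplit : z = (∑ A ∈ α.filter (fun A => A.card = 2), (Gfun q A 1) ^ 2) +
      (∑ A ∈ α.filter (fun A => A.card = 3), (Gfun q A 1) ^ 2) +
      2 * ((∑ A ∈ α.filter (fun A => A.card = 4), (Gfun q A 1) ^ 2) +
        (∑ A ∈ α.filter (fun A => A.card = 6), (Gfun q A 1) ^ 2)) +
      ((∑ A ∈ α.filter (fun A => A.card = 3), (Gfun q A 2) ^ 2) +
        (∑ A ∈ α.filter (fun A => A.card = 4), (Gfun q A 2) ^ 2)) +
      2 * (∑ A ∈ α.filter (fun A => A.card = 6), (Gfun q A 2) ^ 2) +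
      (∑ A ∈ α.filter (fun A => A.card = 6), (Gfun q A 3) ^ 2) := by
    rw [hz, Finset.filter_or, Finset.filter_or, Finset.filter_or,
      Finset.sum_union (hfd 2 3 (by norm_num)), Finset.sum_union (hfd 4 6 (by norm_num)),
      Finset.sum_union (hfd 3 4 (by norm_num))]
  -- lower bound on z
  have hzge : 41 * L ^ 2 + 2 * L * w ≤ z := by
    have e2 := hsum_le 2 1 (2 * L) hGf1
    have e3 := hsum_le 3 1 (2 * L) hGf1
    have e4 := hsum_le 4 1 (2 * L) hGf1
    have e6 := hsum_le 6 1 (2 * L) hGf1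
    have f3 := hsum_le 3 2 (2 * L + 2 * L * L) hGf2
    have f4 := hsum_le 4 2 (2 * L + 2 * L * L) hGf2
    have f6 := hsum_le 6 2 (2 * L + 2 * L * L) hGf2
    have g6 := hsum_le 6 3 (4 * L) hGf3
    rw [h2] at e2; rw [h3] at e3; rw [h4] at e4; rw [h6] at e6
    rw [h3] at f3; rw [h4] at f4; rw [h6] at f6; rw [h6] at g6
    push_cast at e2 e3 e4 e6 f3 f4 f6 g6
    have m3 : 0 ≤ L * L * (∑ A ∈ α.filter (fun A => A.card = 3), q A) :=
      mul_nonneg (mul_nonneg hLpos.le hLpos.le) (hsnn 3)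
    have m4 : 0 ≤ L * L * (∑ A ∈ α.filter (fun A => A.card = 4), q A) :=
      mul_nonneg (mul_nonneg hLpos.le hLpos.le) (hsnn 4)
    have m6 : 0 ≤ L * L * (∑ A ∈ α.filter (fun A => A.card = 6), q A) :=
      mul_nonneg (mul_nonneg hLpos.le hLpos.le) (hsnn 6)
    have m6' : 0 ≤ L * (∑ A ∈ α.filter (fun A => A.card = 6), q A) :=
      mul_nonneg hLpos.le (hsnn 6)
    rw [hzsplit, hw]
    set S2 := ∑ A ∈ α.filter (fun A => A.card = 2), (Gfun q A 1) ^ 2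
    set S3 := ∑ A ∈ α.filter (fun A => A.card = 3), (Gfun q A 1) ^ 2
    set S4 := ∑ A ∈ α.filter (fun A => A.card = 4), (Gfun q A 1) ^ 2
    set S6 := ∑ A ∈ α.filter (fun A => A.card = 6), (Gfun q A 1) ^ 2
    set F3 := ∑ A ∈ α.filter (fun A => A.card = 3), (Gfun q A 2) ^ 2
    set F4 := ∑ A ∈ α.filter (fun A => A.card = 4), (Gfun q A 2) ^ 2
    set F6 := ∑ A ∈ α.filter (fun A => A.card = 6), (Gfun q A 2) ^ 2
    set T6 := ∑ A ∈ α.filter (fun A => A.card = 6), (Gfun q A 3) ^ 2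
    set u1 := ∑ A ∈ α.filter (fun A => A.card = 1), q A
    set u2 := ∑ A ∈ α.filter (fun A => A.card = 2), q A
    set u3 := ∑ A ∈ α.filter (fun A => A.card = 3), q A
    set u4 := ∑ A ∈ α.filter (fun A => A.card = 4), q A
    set u6 := ∑ A ∈ α.filter (fun A => A.card = 6), q A
    clear_value S2 S3 S4 S6 F3 F4 F6 T6 u1 u2 u3 u4 u6
    linarith [e2, e3, e4, e6, f3, f4, f6, g6, m3, m4, m6, m6']
  have hz1 : (1:ℝ) ≤ z := by nlinarith [hzge, hw0, mul_nonneg hLpos.le hw0]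
  have hWz : (max w 1) ^ 2 ≤ z := by
    rcases max_cases w 1 with ⟨hm, hm1⟩ | ⟨hm, hm1⟩ <;> rw [hm]
    · nlinarith [mul_nonneg (show (0:ℝ) ≤ 5 - w by linarith)
        (show (0:ℝ) ≤ 5 + w - 2 * L by linarith)]
    · nlinarith
  -- the constant part of Δ
  set c : ℝ := ∑ A ∈ α, q A * Real.log (A.card : ℝ) with hc
  clear_value c
  have hcw : ∑ A ∈ α, -(q A * ((A.card : ℝ) - 1)) = -w := by
    rw [Finset.sum_neg_distrib, hwdef]
  -- a.e. bounds on Δ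
  have hbound : ∀ᵐ ω ∂μ, c - w ≤ Δ ω ∧ Δ ω ≤ c := by
    have hpos : ∀ᵐ ω ∂μ, ∀ i, 0 < G i ω :=
      (MeasureTheory.ae_all_iff).mpr fun i => aux_exp_pos μ (G i) (hGmeas i) (hGexp i)
    refine hpos.mono fun ω hω => ?_
    have hatom : ∀ A ∈ α,
        -(q A * ((A.card : ℝ) - 1)) ≤ ∑ i ∈ A, P i ω * Real.log (P i ω / q (atα i)) ∧
        ∑ i ∈ A, P i ω * Real.log (P i ω / q (atα i)) ≤ 0 := by
      intro A hA
      have hqA := hq0 A hA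
      have hS : 0 < ∑ j ∈ A, G j ω := Finset.sum_pos (fun j _ => hω j) (hne A hA)
      have hPi : ∀ i ∈ A, P i ω = q A * G i ω / ∑ j ∈ A, G j ω := by
        intro i hi; rw [hP i ω, hat A hA i hi]
      have hPpos : ∀ i ∈ A, 0 < P i ω := by
        intro i hi; rw [hPi i hi]; exact div_pos (mul_pos hqA (hω i)) hS
      have hPle : ∀ i ∈ A, P i ω ≤ q A := by
        intro i hi
        rw [hPi i hi, div_le_iff₀ hS]
        have h1 : G i ω ≤ ∑ j ∈ A, G j ω := Finset.single_le_sum (fun j _ => (hω j).le) hi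
        nlinarith
      have hPsum : ∑ i ∈ A, P i ω = q A := by
        rw [Finset.sum_congr rfl hPi, ← Finset.sum_div, ← Finset.mul_sum]
        field_simp
      constructor
      · have hterm : ∀ i ∈ A, P i ω - q A ≤ P i ω * Real.log (P i ω / q (atα i)) := by
          intro i hi; rw [hat A hA i hi]; exact aux_mul_log_ge _ _ (hPpos i hi) hqA
        calc -(q A * ((A.card : ℝ) - 1)) = ∑ i ∈ A, (P i ω - q A) := by
              rw [Finset.sum_sub_distrib, hPsum, Finset.sum_const, nsmul_eq_mul]; ring
          _ ≤ _ := Finset.sum_le_sum hterm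
      · refine Finset.sum_nonpos fun i hi => ?_
        rw [hat A hA i hi]
        have hl : Real.log (P i ω / q A) ≤ 0 :=
          Real.log_nonpos (div_nonneg (hPpos i hi).le hqA.le) (by rw [div_le_one hqA]; exact hPle i hi)
        nlinarith [(hPpos i hi).le]
    have hs2 := hsumI fun i => P i ω * Real.log (P i ω / q (atα i))
    have hlow : -w ≤ ∑ A ∈ α, ∑ i ∈ A, P i ω * Real.log (P i ω / q (atα i)) := by
      rw [← hcw]
      exact Finset.sum_le_sum fun A hA => (hatom A hA).1
    have hup : ∑ A ∈ α, ∑ i ∈ A, P i ω * Real.log (P i ω / q (atα i)) ≤ 0 :=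
      Finset.sum_nonpos fun A hA => (hatom A hA).2
    rw [hΔ ω, hs2]
    constructor <;> linarith
  -- measurability and integrability of Δ
  have hPmeas : ∀ i, Measurable (P i) := by
    intro i
    have hPe : P i = fun ω => q (atα i) * G i ω / ∑ j ∈ atα i, G j ω := funext (hP i)
    rw [hPe]
    exact (measurable_const.mul (hGmeas i)).div (Finset.measurable_sum _ fun j _ => hGmeas j)
  have hΔmeas : Measurable Δ := by
    have hΔe : Δ = fun ω => c + ∑ i : I, P i ω * Real.log (P i ω / q (atα i)) :=
      funext fun ω => hΔ ω
    rw [hΔe]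
    refine measurable_const.add (Finset.measurable_sum _ fun i _ => ?_)
    exact (hPmeas i).mul (Real.measurable_log.comp ((hPmeas i).div_const _))
  have hΔint : Integrable Δ μ := by
    refine Integrable.mono' (integrable_const (|c| + w)) hΔmeas.aestronglyMeasurable
      (hbound.mono fun ω h => ?_)
    rw [Real.norm_eq_abs]
    exact abs_le.mpr ⟨by linarith [neg_abs_le c], by linarith [le_abs_self c]⟩
  set m : ℝ := ∫ ω', Δ ω' ∂μ with hm
  have hintc : ∀ r : ℝ, ∫ (_ : Ω), r ∂μ = r := by
    intro r; rw [integral_const]; simp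
  have hmle : m ≤ c := by
    rw [hm, ← hintc c]
    exact integral_mono_ae hΔint (integrable_const c) (hbound.mono fun ω h => h.2)
  have hmge : c - w ≤ m := by
    rw [hm, ← hintc (c - w)]
    exact integral_mono_ae (integrable_const (c - w)) hΔint (hbound.mono fun ω h => h.1)
  -- the centered variable X = m - Δ
  have hXmeas : Measurable fun ω => m - Δ ω := measurable_const.sub hΔmeas
  have hXint : Integrable (fun ω => m - Δ ω) μ := (integrable_const m).sub hΔint
  have hX0 : ∫ ω, (m - Δ ω) ∂μ = 0 := by
    rw [integral_sub (integrable_const m) hΔint, hintc m, ← hm]; ring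
  have hWpos : (0:ℝ) < max w 1 := lt_of_lt_of_le one_pos (le_max_right _ _)
  have hXb : ∀ᵐ ω ∂μ, |m - Δ ω| ≤ max w 1 := by
    refine hbound.mono fun ω h => abs_le.mpr ⟨?_, ?_⟩
    · have := le_max_left w 1; linarith
    · have := le_max_left w 1; linarith
  -- Chernoff bound
  have hz0 : (0:ℝ) < z := lt_of_lt_of_le one_pos hz1
  set t : ℝ := lam / z with htdef
  have ht0 : 0 ≤ t := by rw [htdef]; positivity
  have hintexp : Integrable (fun ω => Real.exp (t * (m - Δ ω))) μ :=
    aux_integrable_exp μ (fun ω => m - Δ ω) hXmeas (max w 1) t hXb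
  have hmgfle : mgf (fun ω => m - Δ ω) μ t ≤ Real.exp (t ^ 2 * z / 2) := by
    rw [mgf]
    refine (aux_mgf_le μ (fun ω => m - Δ ω) hXmeas (max w 1) t hWpos hXb hXint hX0).trans ?_
    refine Real.exp_le_exp.mpr ?_
    nlinarith [sq_nonneg t, hWz]
  have hch := measure_ge_le_exp_mul_mgf (μ := μ) (X := fun ω => m - Δ ω) lam ht0 hintexp
  have hreal : (μ {ω | lam ≤ m - Δ ω}).toReal ≤ Real.exp (-(lam ^ 2) / (2 * z)) := by
    refine hch.trans ?_
    have h1 : Real.exp (-t * lam) * mgf (fun ω => m - Δ ω) μ t ≤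
        Real.exp (-t * lam) * Real.exp (t ^ 2 * z / 2) :=
      mul_le_mul_of_nonneg_left hmgfle (Real.exp_nonneg _)
    refine h1.trans ?_
    rw [← Real.exp_add]
    refine le_of_eq (congrArg Real.exp ?_)
    rw [htdef]
    field_simp
    ring
  have hset : {ω | Δ ω ≤ m - lam} = {ω | lam ≤ m - Δ ω} := by
    ext ω; simp only [Set.mem_setOf_eq]; constructor <;> intro h <;> linarith
  calc μ {ω | Δ ω ≤ m - lam} = ENNReal.ofReal ((μ {ω | lam ≤ m - Δ ω}).toReal) := by
        rw [hset, ENNReal.ofReal_toReal (measure_ne_top μ _)]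
    _ ≤ ENNReal.ofReal (Real.exp (-(lam ^ 2) / (2 * z))) := ENNReal.ofReal_le_ofReal hreal
end
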